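/- arXiv:1210.4951 — 8 statements merged into one kernel-verified Lean document; each statement's English description precedes it below -/
import Mathlib

section
/- Let K be a (commutative) field and n a positive integer. If V is a K-linear subspace of M_n(K) all of whose elements are nilpotent matrices, then dim_K V ≤ (n choose 2). -/
open Polynomial Matrix

section helpers
variable {K : Type*} [Field K] {m : ℕ}

lemma charpoly_nilp {M : Matrix (Fin m) (Fin m) K}
    (hM : IsNilpotent M) : M.charpoly = X ^ m := by
  have h := Matrix.isNilpotent_charpoly_sub_pow_of_isNilpotent hM
  rw [← sub_eq_zero]
  simpa [Fintype.card_fin] using h.eq_zero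

lemma pow_eq_zero_nilp {M : Matrix (Fin m) (Fin m) K}
    (hM : IsNilpotent M) : M ^ m = 0 := by
  have := Matrix.aeval_self_charpoly M
  rwa [charpoly_nilp hM, map_pow, aeval_X] at this

lemma my_mul_vecMulVec {R : Type*} [CommRing R] {ι : Type*} [Fintype ι]
    (P : Matrix ι ι R) (u v : ι → R) :
    P * vecMulVec u v = vecMulVec (P.mulVec u) v := by
  ext i j
  simp only [Matrix.mul_apply, vecMulVec_apply, Matrix.mulVec, dotProduct]
  rw [Finset.sum_mul]
  exact Finset.sum_congr rfl fun x _ => by ring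

lemma my_det_one_sub_vecMulVec {R : Type*} [CommRing R] {ι : Type*} [Fintype ι] [DecidableEq ι]
    (u v : ι → R) : det (1 - vecMulVec u v) = 1 - v ⬝ᵥ u := by
  have h := Matrix.det_one_add_replicateCol_mul_replicateRow (ι := Unit) (-u) v
  rw [← vecMulVec_eq] at h
  have h2 : vecMulVec (-u) v = -vecMulVec u v := by
    ext i j; simp [vecMulVec_apply]
  rw [h2] at h
  simpa [sub_eq_add_neg] using h

lemma my_sum_mulVec {R : Type*} [CommRing R] {ι κ : Type*} [Fintype ι] (s : Finset κ)
    (A : κ → Matrix ι ι R) (u : ι → R) :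
    (∑ j ∈ s, A j) *ᵥ u = ∑ j ∈ s, A j *ᵥ u := by
  ext i
  simp only [Matrix.mulVec, dotProduct, Finset.sum_apply, Matrix.sum_apply, Finset.sum_mul]
  rw [Finset.sum_comm]

lemma my_dotProduct_sum {R : Type*} [CommRing R] {ι κ : Type*} [Fintype ι] (s : Finset κ)
    (v : ι → R) (w : κ → ι → R) :
    v ⬝ᵥ (∑ j ∈ s, w j) = ∑ j ∈ s, v ⬝ᵥ w j := by
  simp only [dotProduct, Finset.sum_apply, Finset.mul_sum]
  rw [Finset.sum_comm]

end helpers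

set_option maxHeartbeats 1000000 in
/-- Key lemma: if `M` and `M + u vᵀ` are nilpotent, then `vᵀ M u = 0`. -/
lemma key_lemma {K : Type*} [Field K] {m : ℕ} (M : Matrix (Fin m) (Fin m) K)
    (u v : Fin m → K) (hM : IsNilpotent M) (hMN : IsNilpotent (M + vecMulVec u v)) :
    v ⬝ᵥ M.mulVec u = 0 := by
  classical
  rcases Nat.lt_or_ge m 2 with hm | hm
  · interval_cases m
    · simp [dotProduct]
    · have h0 : M = 0 := by
        have ht := (Matrix.isNilpotent_trace_of_isNilpotent hM).eq_zero
        ext i j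
        fin_cases i; fin_cases j
        simpa [Matrix.trace] using ht
      simp [h0]
  · -- main case, m ≥ 2
    set F := FractionRing (Polynomial K)
    set algF : Polynomial K →+* F := algebraMap (Polynomial K) F with halgF
    set ρ : K →+* F := algF.comp (C : K →+* Polynomial K) with hρ
    set t : F := algF X with htdef
    have hinj : Function.Injective algF := IsFractionRing.injective (Polynomial K) F
    have ht : t ≠ 0 := by
      intro h
      exact X_ne_zero (R := K) (hinj (by simpa using h))
    set Mf : Matrix (Fin m) (Fin m) F := M.map ρ with hMf
    set uf : Fin m → F := fun i => ρ (u i) with huf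
    set vf : Fin m → F := fun i => ρ (v i) with hvf
    have hmap_pow : ∀ j, Mf ^ j = (M ^ j).map ρ := by
      intro j
      rw [hMf, ← RingHom.mapMatrix_apply, ← RingHom.mapMatrix_apply, ← map_pow]
    have hMm : Mf ^ m = 0 := by
      rw [hmap_pow, pow_eq_zero_nilp hM]
      ext i j; simp
    set A : Matrix (Fin m) (Fin m) F := (charmatrix M).map algF with hA
    have hAform : A = t • (1 : Matrix (Fin m) (Fin m) F) - Mf := by
      ext i j
      by_cases h : i = j
      · subst h
        simp [hA, charmatrix_apply_eq, Matrix.one_apply_eq, hMf, hρ, htdef]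
      · simp [hA, charmatrix_apply_ne _ _ _ h, Matrix.one_apply_ne h, hMf, hρ]
    have detA : A.det = t ^ m := by
      rw [hA, ← RingHom.mapMatrix_apply, ← RingHom.map_det]
      change algF M.charpoly = t ^ m
      rw [charpoly_nilp hM, map_pow]
    set S : Matrix (Fin m) (Fin m) F := ∑ j ∈ Finset.range m, t ^ (m - 1 - j) • Mf ^ j with hS
    have hAS : A * S = t ^ m • 1 := by
      rw [hAform, hS, Finset.mul_sum]
      have hterm : ∀ j ∈ Finset.range m,
          (t • (1 : Matrix (Fin m) (Fin m) F) - Mf) * (t ^ (m - 1 - j) • Mf ^ j)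
            = (fun j => t ^ (m - j) • Mf ^ j) j - (fun j => t ^ (m - j) • Mf ^ j) (j + 1) := by
        intro j hj
        rw [Finset.mem_range] at hj
        simp only
        rw [sub_mul, Matrix.smul_mul, Matrix.one_mul, Matrix.mul_smul, smul_smul]
        have e1 : t * t ^ (m - 1 - j) = t ^ (m - j) := by
          rw [← pow_succ']
          congr 1
          omega
        have e2 : (m : ℕ) - 1 - j = m - (j + 1) := by omega
        have e3 : Mf * Mf ^ j = Mf ^ (j + 1) := (pow_succ' Mf j).symm
        rw [e1, e2, e3]
      rw [Finset.sum_congr rfl hterm, Finset.sum_range_sub']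
      simp [hMm]
    set Ai : Matrix (Fin m) (Fin m) F := (t ^ m)⁻¹ • S with hAi
    have htm : (t : F) ^ m ≠ 0 := pow_ne_zero _ ht
    have hAAi : A * Ai = 1 := by
      rw [hAi, Matrix.mul_smul, hAS, smul_smul, inv_mul_cancel₀ htm, one_smul]
    set Wf : Matrix (Fin m) (Fin m) F := vecMulVec uf vf with hWf
    have hdet2 : (A - Wf).det = t ^ m := by
      have hsub : A - Wf = (charmatrix (M + vecMulVec u v)).map algF := by
        ext i j
        by_cases h : i = j
        · subst h
          simp only [hA, hWf, Matrix.sub_apply, Matrix.map_apply, charmatrix_apply_eq,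
            Matrix.add_apply, vecMulVec_apply, map_sub, map_add, huf, hvf, hρ,
            RingHom.comp_apply, C_mul, _root_.map_mul]
          ring
        · simp only [hA, hWf, Matrix.sub_apply, Matrix.map_apply,
            charmatrix_apply_ne _ _ _ h, Matrix.add_apply, vecMulVec_apply, map_neg,
            map_add, huf, hvf, hρ, RingHom.comp_apply, C_mul, _root_.map_mul]
          ring
      rw [hsub, ← RingHom.mapMatrix_apply, ← RingHom.map_det]
      change algF (Matrix.charpoly _) = _
      rw [charpoly_nilp hMN, map_pow]
    have hfact : A - Wf = A * (1 - Ai * Wf) := by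
      rw [Matrix.mul_sub, Matrix.mul_one, ← Matrix.mul_assoc, hAAi, Matrix.one_mul]
    have hdet3 : det (1 - Ai * Wf) = 1 := by
      rw [hfact, det_mul, detA] at hdet2
      exact mul_left_cancel₀ htm (by rw [hdet2, mul_one])
    have hAiW : Ai * Wf = vecMulVec (Ai.mulVec uf) vf := by
      rw [hWf, my_mul_vecMulVec]
    rw [hAiW, my_det_one_sub_vecMulVec] at hdet3
    have hvAu : vf ⬝ᵥ Ai.mulVec uf = 0 := by
      have := sub_eq_self.mp hdet3
      exact this
    rw [hAi, smul_mulVec, dotProduct_smul, smul_eq_mul] at hvAu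
    have hvSu : vf ⬝ᵥ S.mulVec uf = 0 := by
      rcases mul_eq_zero.mp hvAu with h | h
      · exact absurd h (inv_ne_zero htm)
      · exact h
    set d : ℕ → K := fun j => v ⬝ᵥ (M ^ j).mulVec u with hd
    have hexp : vf ⬝ᵥ S.mulVec uf = ∑ j ∈ Finset.range m, t ^ (m - 1 - j) * ρ (d j) := by
      rw [hS, my_sum_mulVec, my_dotProduct_sum]
      refine Finset.sum_congr rfl fun j hj => ?_
      rw [smul_mulVec, dotProduct_smul, smul_eq_mul]
      congr 1
      rw [hmap_pow, hd]
      simp [dotProduct, Matrix.mulVec, huf, hvf, map_sum, _root_.map_mul]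
    have hp0 : algF (∑ j ∈ Finset.range m, C (d j) * X ^ (m - 1 - j)) = 0 := by
      rw [map_sum, ← hvSu, hexp]
      refine Finset.sum_congr rfl fun j hj => ?_
      rw [_root_.map_mul, map_pow]
      change ρ (d j) * t ^ (m - 1 - j) = _
      ring
    have hp : (∑ j ∈ Finset.range m, C (d j) * X ^ (m - 1 - j)) = 0 :=
      hinj (by rw [hp0, map_zero])
    have hc := congrArg (fun p => Polynomial.coeff p (m - 2)) hp
    simp only [Polynomial.finset_sum_coeff, coeff_C_mul, coeff_X_pow, coeff_zero] at hc
    rw [Finset.sum_eq_single_of_mem 1 (Finset.mem_range.mpr (by omega))] at hc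
    · have : d 1 = 0 := by simpa [show m - 2 = m - 1 - 1 by omega] using hc
      simpa [hd, pow_one] using this
    · intro j hj hne
      rw [Finset.mem_range] at hj
      have hcond : ¬ ((m : ℕ) - 2 = m - 1 - j) := by omega
      simp [hcond]
open Polynomial Matrix Module

section blocks
variable {K : Type*} [Field K] {n : ℕ}

lemma col_zero_pow (M : Matrix (Fin (n+1)) (Fin (n+1)) K)
    (h : ∀ i : Fin n, M i.succ 0 = 0) (k : ℕ) :
    ∀ i, (M ^ k) i 0 = if i = 0 then (M 0 0) ^ k else 0 := by
  induction k with
  | zero => intro i; simp [Matrix.one_apply]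
  | succ k ih =>
    intro i
    rw [pow_succ', Matrix.mul_apply]
    have step : ∀ j, M i j * (M ^ k) j 0 = if j = 0 then M i 0 * (M 0 0) ^ k else 0 := by
      intro j
      rw [ih j]
      split_ifs with hj
      · subst hj; ring
      · ring
    rw [Finset.sum_congr rfl fun j _ => step j, Finset.sum_ite_eq' Finset.univ 0
      (fun _ => M i 0 * (M 0 0) ^ k)]
    simp only [Finset.mem_univ, if_true]
    rcases Fin.eq_zero_or_eq_succ i with rfl | ⟨j, rfl⟩
    · rw [if_pos rfl, pow_succ']
    · rw [if_neg (Fin.succ_ne_zero j), h j, zero_mul]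

lemma diag00 (M : Matrix (Fin (n+1)) (Fin (n+1)) K) (hM : IsNilpotent M)
    (h : ∀ i : Fin n, M i.succ 0 = 0) : M 0 0 = 0 := by
  obtain ⟨k, hk⟩ := hM
  have h2 := col_zero_pow M h k 0
  rw [hk] at h2
  simp only [Matrix.zero_apply, if_pos rfl] at h2
  exact (IsNilpotent.eq_zero ⟨k, h2.symm⟩)

lemma submatrix_pow (M : Matrix (Fin (n+1)) (Fin (n+1)) K)
    (h : ∀ i : Fin n, M i.succ 0 = 0) (k : ℕ) :
    (M.submatrix Fin.succ Fin.succ) ^ k = (M ^ k).submatrix Fin.succ Fin.succ := by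
  induction k with
  | zero =>
    ext i j
    simp [Matrix.one_apply, Fin.succ_inj]
  | succ k ih =>
    rw [pow_succ', pow_succ', ih]
    ext i j
    rw [Matrix.submatrix_apply, Matrix.mul_apply, Matrix.mul_apply, Fin.sum_univ_succ]
    simp [h i]

end blocks

section bilin

variable (K : Type*) [Field K] (n : ℕ)

noncomputable def dotBilin : LinearMap.BilinForm K (Fin n → K) :=
  LinearMap.mk₂ K (fun x y => x ⬝ᵥ y)
    (fun x x' y => add_dotProduct x x' y)
    (fun a x y => smul_dotProduct a x y)
    (fun x y y' => dotProduct_add x y y')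
    (fun a x y => dotProduct_smul a x y)

@[simp] lemma dotBilin_apply (x y : Fin n → K) : dotBilin K n x y = x ⬝ᵥ y := rfl

lemma dotBilin_nondegenerate : (dotBilin K n).Nondegenerate := by
  refine ⟨fun x hx => ?_, fun x hx => ?_⟩
  · funext i
    have := hx (Pi.single i 1)
    rwa [dotBilin_apply, dotProduct_single_one] at this
  · funext i
    have := hx (Pi.single i 1)
    rwa [dotBilin_apply, single_one_dotProduct] at this

lemma dotBilin_refl : (dotBilin K n).IsRefl := by
  intro x y hxy
  rwa [dotBilin_apply, dotProduct_comm] at hxy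

lemma dim_orth {B C : Submodule K (Fin n → K)}
    (h : ∀ b ∈ B, ∀ c ∈ C, c ⬝ᵥ b = 0) :
    finrank K B + finrank K C ≤ n := by
  have hBle : B ≤ (dotBilin K n).orthogonal C := by
    intro b hb
    rw [LinearMap.BilinForm.mem_orthogonal_iff]
    intro c hc
    exact h b hb c hc
  have h1 : finrank K B ≤ finrank K ((dotBilin K n).orthogonal C) :=
    Submodule.finrank_mono hBle
  have h2 : finrank K ((dotBilin K n).orthogonal C) = finrank K (Fin n → K) - finrank K C :=
    LinearMap.BilinForm.finrank_orthogonal (dotBilin_nondegenerate K n) C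
  have h3 : finrank K (Fin n → K) = n := by rw [Module.finrank_fin_fun]
  have h4 : finrank K C ≤ n := by
    have := Submodule.finrank_le C
    rwa [h3] at this
  omega
end bilin

section mainproof
variable {K : Type*} [Field K] {n : ℕ}

/-- The "lower-left column" linear map. -/
def colMap (K : Type*) [Field K] (n : ℕ) :
    Matrix (Fin (n+1)) (Fin (n+1)) K →ₗ[K] (Fin n → K) where
  toFun := fun M i => M i.succ 0
  map_add' := fun x y => by funext i; simp
  map_smul' := fun a x => by funext i; simp

/-- The "lower-right block" linear map. -/
def blockMap (K : Type*) [Field K] (n : ℕ) :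
    Matrix (Fin (n+1)) (Fin (n+1)) K →ₗ[K] Matrix (Fin n) (Fin n) K where
  toFun := fun M => M.submatrix Fin.succ Fin.succ
  map_add' := fun x y => by ext i j; simp
  map_smul' := fun a x => by ext i j; simp

/-- The "upper-right row" linear map. -/
def rowMap (K : Type*) [Field K] (n : ℕ) :
    Matrix (Fin (n+1)) (Fin (n+1)) K →ₗ[K] (Fin n → K) where
  toFun := fun M j => M 0 j.succ
  map_add' := fun x y => by funext j; simp
  map_smul' := fun a x => by funext j; simp

lemma finrank_domRestrict_split {E F : Type*} [AddCommGroup E] [Module K E]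
    [FiniteDimensional K E] [AddCommGroup F] [Module K F]
    (f : E →ₗ[K] F) (V : Submodule K E) :
    finrank K V = finrank K (V.map f) + finrank K (V ⊓ LinearMap.ker f : Submodule K E) := by
  have h := LinearMap.finrank_range_add_finrank_ker (f.domRestrict V)
  rw [LinearMap.range_domRestrict, LinearMap.ker_domRestrict] at h
  rw [← h]
  congr 1
  rw [← Submodule.finrank_map_subtype_eq V (Submodule.comap V.subtype (LinearMap.ker f)),
    Submodule.map_comap_subtype]

theorem gerstenhaber_aux (K : Type*) [Field K] :
    ∀ n : ℕ, ∀ V : Submodule K (Matrix (Fin n) (Fin n) K),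
      (∀ M ∈ V, IsNilpotent M) → Module.finrank K V ≤ n.choose 2 := by
  intro n
  induction n with
  | zero =>
    intro V _
    have h2 : finrank K (Matrix (Fin 0) (Fin 0) K) = 0 := by
      have : Subsingleton (Matrix (Fin 0) (Fin 0) K) :=
        ⟨fun a b => by ext i j; exact i.elim0⟩
      exact Module.finrank_zero_of_subsingleton
    simpa [h2] using (V.finrank_le).trans h2.le
  | succ n ih =>
    intro V hV
    classical
    set V₁ : Submodule K (Matrix (Fin (n+1)) (Fin (n+1)) K) :=
      V ⊓ LinearMap.ker (colMap K n) with hV₁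
    set V₂ : Submodule K (Matrix (Fin (n+1)) (Fin (n+1)) K) :=
      V₁ ⊓ LinearMap.ker (blockMap K n) with hV₂
    have hcol : ∀ M ∈ V₁, ∀ i : Fin n, M i.succ 0 = 0 := by
      intro M hM i
      exact congrFun (LinearMap.mem_ker.mp hM.2) i
    -- split 1
    have e1 : finrank K V = finrank K (V.map (colMap K n)) + finrank K V₁ :=
      finrank_domRestrict_split (colMap K n) V
    -- split 2
    have e2 : finrank K V₁ = finrank K (V₁.map (blockMap K n)) + finrank K V₂ :=
      finrank_domRestrict_split (blockMap K n) V₁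
    -- split 3 : rowMap injective on V₂
    have hV₂zero : V₂ ⊓ LinearMap.ker (rowMap K n) = ⊥ := by
      rw [Submodule.eq_bot_iff]
      rintro M ⟨⟨⟨hMV, hMc⟩, hMb⟩, hMr⟩
      ext i j
      rcases Fin.eq_zero_or_eq_succ i with rfl | ⟨i', rfl⟩
      · rcases Fin.eq_zero_or_eq_succ j with rfl | ⟨j', rfl⟩
        · exact diag00 M (hV M hMV) (fun i => congrFun (LinearMap.mem_ker.mp hMc) i)
        · exact congrFun (LinearMap.mem_ker.mp hMr) j'
      · rcases Fin.eq_zero_or_eq_succ j with rfl | ⟨j', rfl⟩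
        · exact congrFun (LinearMap.mem_ker.mp hMc) i'
        · exact congrArg (fun A : Matrix (Fin n) (Fin n) K => A i' j') (LinearMap.mem_ker.mp hMb)
    have e3 : finrank K V₂ = finrank K (V₂.map (rowMap K n)) := by
      have h := finrank_domRestrict_split (rowMap K n) V₂
      rw [hV₂zero] at h
      simpa using h
    -- the block image is a nilpotent subspace
    have hWnil : ∀ D ∈ V₁.map (blockMap K n), IsNilpotent D := by
      rintro D ⟨M, hM, rfl⟩
      obtain ⟨k, hk⟩ := hV M hM.1
      refine ⟨k, ?_⟩
      show (M.submatrix Fin.succ Fin.succ) ^ k = 0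
      rw [submatrix_pow M (hcol M hM) k, hk]
      ext i j
      simp
    have h1 := ih (V₁.map (blockMap K n)) hWnil
    -- orthogonality
    have horth : ∀ b ∈ V₂.map (rowMap K n), ∀ c ∈ V.map (colMap K n), c ⬝ᵥ b = 0 := by
      rintro b ⟨N, hN, rfl⟩ c ⟨M, hM, rfl⟩
      set u : Fin (n+1) → K := fun i => if i = 0 then 1 else 0 with hu
      set v : Fin (n+1) → K := fun i => Fin.cases 0 (fun j => N 0 j.succ) i with hv
      have hNform : N = vecMulVec u v := by
        ext i j
        rw [vecMulVec_apply]
        rcases Fin.eq_zero_or_eq_succ i with rfl | ⟨i', rfl⟩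
        · rcases Fin.eq_zero_or_eq_succ j with rfl | ⟨j', rfl⟩
          · rw [diag00 N (hV N hN.1.1) (hcol N hN.1)]
            simp [hu, hv]
          · simp [hu, hv]
        · rw [hu]
          simp only [Fin.succ_ne_zero, if_false, zero_mul]
          rcases Fin.eq_zero_or_eq_succ j with rfl | ⟨j', rfl⟩
          · exact hcol N hN.1 i'
          · exact congrArg (fun A : Matrix (Fin n) (Fin n) K => A i' j') (LinearMap.mem_ker.mp hN.2)
      have hsum : IsNilpotent (M + N) := hV _ (V.add_mem hM hN.1.1)
      have hkey := key_lemma M u v (hV M hM) (by rwa [hNform] at hsum)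
      rw [show (v ⬝ᵥ M *ᵥ u) = (colMap K n) M ⬝ᵥ (rowMap K n) N from ?_] at hkey
      · exact hkey
      · have hMu : ∀ i, (M *ᵥ u) i = M i 0 := by
          intro i
          rw [Matrix.mulVec, hu]
          simp [dotProduct]
        rw [dotProduct]
        rw [Finset.sum_congr rfl fun i _ => by rw [hMu i]]
        rw [Fin.sum_univ_succ]
        simp only [hv, Fin.cases_zero, zero_mul, zero_add, Fin.cases_succ]
        rw [dotProduct]
        exact Finset.sum_congr rfl fun j _ => by
          simp only [colMap, rowMap, LinearMap.coe_mk, AddHom.coe_mk]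
          ring
    have e4 : finrank K (V₂.map (rowMap K n)) + finrank K (V.map (colMap K n)) ≤ n :=
      dim_orth K n horth
    have hch : (n+1).choose 2 = n.choose 2 + n := by
      rw [Nat.choose_succ_succ]
      simp [Nat.choose_one_right]
      omega
    omega

end mainproof

/-- Gerstenhaber inequality: a linear subspace of nilpotent `n × n` matrices over a
commutative field `K` has dimension at most `n choose 2`. -/
theorem stmt_2 (K : Type*) [Field K] (n : ℕ) (hn : 0 < n)
    (V : Submodule K (Matrix (Fin n) (Fin n) K))
    (hV : ∀ M ∈ V, IsNilpotent M) :
    Module.finrank K V ≤ n.choose 2 :=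
  gerstenhaber_aux K n V hV
end

section
/- Let K be a finite field of cardinality p and n a positive integer. If V is a subgroup of the additive group (M_n(K), +) in which every matrix is nilpotent, then the cardinality of V is at most p^(n choose 2). -/
open Matrix Polynomial Module Equiv

namespace NilpotentMatrixAux

section IdealLemmas

variable {R : Type*} [CommRing R] {n : ℕ}

lemma prod_one_add_mem (I : Ideal R) {ι : Type*} (s : Finset ι) (f : ι → R)
    (hf : ∀ i ∈ s, f i ∈ I) :
    (∏ i ∈ s, (1 + f i)) - (1 + ∑ i ∈ s, f i) ∈ I ^ 2 := by
  classical
  induction s using Finset.induction with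
  | empty => simp
  | @insert a s ha ih =>
    have hfa : f a ∈ I := hf a (Finset.mem_insert_self a s)
    have hsum : (∑ i ∈ s, f i) ∈ I := Ideal.sum_mem _ fun i hi => hf i (Finset.mem_insert_of_mem hi)
    have ih' := ih (fun i hi => hf i (Finset.mem_insert_of_mem hi))
    rw [Finset.prod_insert ha, Finset.sum_insert ha]
    have key : (1 + f a) * ∏ i ∈ s, (1 + f i) - (1 + (f a + ∑ i ∈ s, f i))
        = (1 + f a) * ((∏ i ∈ s, (1 + f i)) - (1 + ∑ i ∈ s, f i)) + f a * ∑ i ∈ s, f i := by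
      ring
    rw [key]
    refine add_mem (Ideal.mul_mem_left _ _ ih') ?_
    rw [sq]
    exact Ideal.mul_mem_mul hfa hsum

lemma det_one_add_mem (I : Ideal R) (N : Matrix (Fin n) (Fin n) R)
    (hN : ∀ i j, N i j ∈ I) :
    det (1 + N) - (1 + trace N) ∈ I ^ 2 := by
  classical
  rw [Matrix.det_apply]
  rw [← Finset.sum_erase_add _ _ (Finset.mem_univ (1 : Perm (Fin n)))]
  have hid : (Equiv.Perm.sign (1 : Perm (Fin n))) • ∏ i, (1 + N) ((1 : Perm (Fin n)) i) i
      = ∏ i, (1 + (N i i)) := by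
    simp [Matrix.add_apply, Matrix.one_apply]
  rw [hid]
  have h1 : (∏ i, (1 + N i i)) - (1 + trace N) ∈ I ^ 2 := by
    have := prod_one_add_mem I Finset.univ (fun i => N i i) (fun i _ => hN i i)
    simpa [Matrix.trace, Matrix.diag] using this
  have h2 : (∑ σ ∈ Finset.univ.erase (1 : Perm (Fin n)),
      Equiv.Perm.sign σ • ∏ i, (1 + N) (σ i) i) ∈ I ^ 2 := by
    refine Ideal.sum_mem _ fun σ hσ => ?_
    have hσ1 : σ ≠ 1 := (Finset.mem_erase.mp hσ).1
    obtain ⟨i₁, hi₁⟩ : ∃ i, σ i ≠ i := by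
      by_contra h
      push_neg at h
      exact hσ1 (Equiv.ext h)
    set i₂ := σ i₁ with hi₂def
    have hne : i₂ ≠ i₁ := hi₁
    have hi₂ : σ i₂ ≠ i₂ := by
      intro h
      exact hi₁ (σ.injective (by rw [h]))
    have hoff : ∀ i, σ i ≠ i → (1 + N) (σ i) i = N (σ i) i := by
      intro i hi
      simp [Matrix.add_apply, Matrix.one_apply_ne hi]
    have hmem : (∏ i, (1 + N) (σ i) i) ∈ I ^ 2 := by
      rw [← Finset.mul_prod_erase _ _ (Finset.mem_univ i₁),
        ← Finset.mul_prod_erase _ _ (Finset.mem_erase.mpr ⟨hne, Finset.mem_univ i₂⟩),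
        ← mul_assoc, hoff i₁ hi₁, hoff i₂ hi₂]
      refine Ideal.mul_mem_right _ _ ?_
      rw [sq]
      exact Ideal.mul_mem_mul (hN _ _) (hN _ _)
    have hz : Equiv.Perm.sign σ • (∏ i, (1 + N) (σ i) i)
        = ((Equiv.Perm.sign σ : ℤ) : R) * (∏ i, (1 + N) (σ i) i) := by
      rw [Units.smul_def, zsmul_eq_mul]
    rw [hz]
    exact Ideal.mul_mem_left _ _ hmem
  have key : (∑ σ ∈ Finset.univ.erase (1 : Perm (Fin n)),
        Equiv.Perm.sign σ • ∏ i, (1 + N) (σ i) i) + (∏ i, (1 + N i i)) - (1 + trace N)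
      = ((∏ i, (1 + N i i)) - (1 + trace N)) + (∑ σ ∈ Finset.univ.erase (1 : Perm (Fin n)),
      Equiv.Perm.sign σ • ∏ i, (1 + N) (σ i) i) := by ring
  rw [key]
  exact add_mem h1 h2

end IdealLemmas

section FieldLemmas

variable {K : Type*} [Field K] {n : ℕ}

lemma det_one_sub_X_smul_eq_one (M : Matrix (Fin n) (Fin n) K) (hM : IsNilpotent M) :
    det (1 - (X : K[X]) • M.map C) = 1 := by
  classical
  set N : Matrix (Fin n) (Fin n) K[X] := (X : K[X]) • M.map C with hNdef
  have hNnil : IsNilpotent N := by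
    obtain ⟨k, hk⟩ := hM
    refine ⟨k, ?_⟩
    rw [hNdef, _root_.smul_pow]
    have : (M.map C) ^ k = (M ^ k).map C := by
      simpa [RingHom.mapMatrix_apply] using (map_pow (C.mapMatrix) M k).symm
    rw [this, hk]
    simp
  have hu : IsUnit (1 - N) := hNnil.isUnit_one_sub
  have hdet : IsUnit (det (1 - N)) := (Matrix.isUnit_iff_isUnit_det _).mp hu
  obtain ⟨r, -, hr⟩ := Polynomial.isUnit_iff.mp hdet
  have heval : eval 0 (det (1 - N)) = 1 := by
    have hmap : (Polynomial.evalRingHom (0 : K)) (det (1 - N))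
        = det ((1 - N).map (Polynomial.evalRingHom (0 : K))) := RingHom.map_det _ _
    have hone : (1 - N).map (Polynomial.evalRingHom (0 : K)) = 1 := by
      ext i j
      simp [hNdef, Matrix.map_apply, Matrix.sub_apply, Matrix.smul_apply, Matrix.one_apply,
        smul_eq_mul, apply_ite]
    rw [hone] at hmap
    simpa using hmap
  rw [← hr] at heval ⊢
  rw [eval_C] at heval
  rw [heval]
  simp

lemma trace_mul_eq_zero_of_nilpotent (A B : Matrix (Fin n) (Fin n) K)
    (hA : IsNilpotent A) (hB : IsNilpotent B) (hAB : IsNilpotent (A + B)) :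
    trace (A * B) = 0 := by
  classical
  set x : K[X] := X with hxdef
  set a : Matrix (Fin n) (Fin n) K[X] := x • A.map C with hadef
  set b : Matrix (Fin n) (Fin n) K[X] := x • B.map C with hbdef
  set U : Matrix (Fin n) (Fin n) K[X] := 1 - x • (A + B).map C with hUdef
  have hdetU : det U = 1 := det_one_sub_X_smul_eq_one _ hAB
  have hUab : U = 1 - a - b := by
    rw [hUdef, hadef, hbdef]
    have : (A + B).map (C : K → K[X]) = A.map C + B.map C := by
      ext i j; simp [Matrix.map_apply, Matrix.add_apply]
    rw [this, smul_add]
    abel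
  have hUunit : IsUnit U.det := by rw [hdetU]; exact isUnit_one
  have hUU : U * U⁻¹ = 1 := Matrix.mul_nonsing_inv _ hUunit
  set W : Matrix (Fin n) (Fin n) K[X] := U⁻¹ * (A.map C * B.map C) with hWdef
  have hab : a * b = (x * x) • (A.map C * B.map C) := smul_mul_smul_comm x (A.map C) x (B.map C)
  have key : (1 - a) * (1 - b) = U * (1 + (x * x) • W) := by
    have h1 : U * ((x * x) • W) = (x * x) • (A.map C * B.map C) := by
      rw [mul_smul_comm, hWdef, ← Matrix.mul_assoc, hUU, Matrix.one_mul]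
    rw [Matrix.mul_add, Matrix.mul_one, h1, hUab]
    rw [← hab]
    noncomm_ring
  have hdet1 : det (1 + (x * x) • W) = 1 := by
    have := congrArg det key
    rw [det_mul, det_mul, hdetU, one_mul] at this
    rw [← this, hadef, hbdef]
    rw [det_one_sub_X_smul_eq_one A hA, det_one_sub_X_smul_eq_one B hB]
    simp
  -- apply the ideal lemma
  have hmem := det_one_add_mem (Ideal.span {x * x}) ((x * x) • W)
    (fun i j => by
      rw [Matrix.smul_apply, smul_eq_mul]
      exact Ideal.mem_span_singleton.mpr (dvd_mul_right _ _))
  rw [hdet1] at hmem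
  have hsq : (Ideal.span {x * x}) ^ 2 = Ideal.span {(x * x) * (x * x)} := by
    rw [Ideal.span_singleton_pow]
    ring_nf
  rw [hsq] at hmem
  have htr : trace ((x * x) • W) = (x * x) * trace W := by
    rw [trace_smul, smul_eq_mul]
  have hdvd : (x * x) * (x * x) ∣ (x * x) * trace W := by
    have : (1 : K[X]) - (1 + trace ((x*x) • W)) = -((x*x) * trace W) := by
      rw [htr]; ring
    rw [this] at hmem
    exact (dvd_neg.mp (Ideal.mem_span_singleton.mp hmem))
  have hxx : (x * x : K[X]) ≠ 0 := by
    simp [hxdef, X_ne_zero, mul_ne_zero]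
  have hdvd2 : (x * x) ∣ trace W := (mul_dvd_mul_iff_left hxx).mp hdvd
  -- evaluate at 0
  obtain ⟨c, hc⟩ := hdvd2
  have hevW : trace (W.map (Polynomial.evalRingHom (0:K))) = eval 0 (trace W) := by
    simp [Matrix.trace, Matrix.diag, Matrix.map_apply, eval_finset_sum]
  have hWmap : W.map (Polynomial.evalRingHom (0:K)) = A * B := by
    have hmul : W.map (Polynomial.evalRingHom (0:K))
        = U⁻¹.map (Polynomial.evalRingHom (0:K))
          * ((A.map C).map (Polynomial.evalRingHom (0:K))
            * (B.map C).map (Polynomial.evalRingHom (0:K))) := by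
      rw [hWdef, Matrix.map_mul, Matrix.map_mul]
    have hAmap : (A.map C).map (Polynomial.evalRingHom (0:K)) = A := by
      ext i j; simp [Matrix.map_apply]
    have hBmap : (B.map C).map (Polynomial.evalRingHom (0:K)) = B := by
      ext i j; simp [Matrix.map_apply]
    have hU0 : U.map (Polynomial.evalRingHom (0:K)) = 1 := by
      ext i j
      simp only [hUdef, hxdef, Matrix.map_apply, Matrix.sub_apply, Matrix.smul_apply,
        Matrix.one_apply, smul_eq_mul, coe_evalRingHom, eval_sub, eval_mul, eval_X, eval_C,
        zero_mul, sub_zero, apply_ite, eval_one, eval_zero]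
      split <;> simp
    have hUinv : U⁻¹.map (Polynomial.evalRingHom (0:K)) = 1 := by
      have := congrArg (fun M => M.map (Polynomial.evalRingHom (0:K))) hUU
      simp only [Matrix.map_mul] at this
      rw [hU0, Matrix.one_mul] at this
      simpa using this
    rw [hmul, hUinv, hAmap, hBmap, Matrix.one_mul]
  have : trace (A * B) = eval 0 (trace W) := by rw [← hWmap, hevW]
  rw [this, hc]
  simp [hxdef]

end FieldLemmas

lemma card_hom {G H : Type*} [AddGroup G] [AddGroup H] (f : G →+ H) :
    Nat.card G = Nat.card f.ker * Nat.card f.range := by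
  rw [AddSubgroup.card_eq_card_quotient_mul_card_addSubgroup f.ker,
    Nat.card_congr (QuotientAddGroup.quotientKerEquivRange f).toEquiv, mul_comm]

lemma blk_pow {K : Type*} [CommRing K] {m : ℕ} (A : Matrix (Fin (m+1)) (Fin (m+1)) K)
    (h0 : ∀ i, A i 0 = 0) :
    ∀ k, (A ^ k).submatrix Fin.succ Fin.succ = (A.submatrix Fin.succ Fin.succ) ^ k := by
  intro k
  induction k with
  | zero =>
    ext i j
    simp [Matrix.submatrix_apply, Matrix.one_apply, Fin.succ_inj]
  | succ k ih =>
    rw [pow_succ', pow_succ', ← ih]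
    ext i j
    rw [Matrix.submatrix_apply, Matrix.mul_apply, Matrix.mul_apply, Fin.sum_univ_succ]
    simp only [h0, zero_mul, zero_add, Matrix.submatrix_apply]

lemma col_zero_of_single {K : Type*} [Field K] {m : ℕ}
    (A : Matrix (Fin (m+1)) (Fin (m+1)) K) (hA : IsNilpotent A) (c : K)
    (hcol : ∀ i, A i 0 = c * (Pi.single (0 : Fin (m+1)) (1:K) : Fin (m+1) → K) i) :
    ∀ i, A i 0 = 0 := by
  -- A *ᵥ single 0 1 = c • single 0 1, nilpotent ⟹ c = 0
  set v : Fin (m+1) → K := Pi.single (0 : Fin (m+1)) (1:K) with hv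
  have hmv : A *ᵥ v = c • v := by
    ext i
    rw [Matrix.mulVec_single]
    simpa using hcol i
  have hpow : ∀ k, (A ^ k) *ᵥ v = c ^ k • v := by
    intro k
    induction k with
    | zero => simp
    | succ k ih =>
      rw [pow_succ, ← Matrix.mulVec_mulVec, hmv, Matrix.mulVec_smul, ih, smul_smul, ← pow_succ']
  obtain ⟨k, hk⟩ := hA
  have := hpow k
  rw [hk] at this
  have h0 : (0 : Fin (m+1) → K) 0 = (c ^ k • v) 0 := by rw [← this]; simp
  have hc : c ^ k = 0 := by
    simpa [hv, Pi.single_eq_same] using h0.symm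
  have : c = 0 := (pow_eq_zero_iff'.mp hc).1
  intro i
  rw [hcol i, this, zero_mul]

lemma dim_bound {K : Type*} [Field K] {N : ℕ} (S₁ S₂ : Submodule K (Fin N → K))
    (horth : ∀ u ∈ S₁, ∀ w ∈ S₂, u ⬝ᵥ w = 0) :
    Module.finrank K S₁ + Module.finrank K S₂ ≤ N := by
  classical
  set ψ : (Fin N → K) →ₗ[K] Module.Dual K (Fin N → K) :=
    { toFun := fun w =>
        { toFun := fun u => u ⬝ᵥ w
          map_add' := fun a b => add_dotProduct a b w
          map_smul' := fun c a => smul_dotProduct c a w }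
      map_add' := fun w1 w2 => LinearMap.ext fun u => dotProduct_add u w1 w2
      map_smul' := fun c w => LinearMap.ext fun u => dotProduct_smul c u w } with hψ
  have hψinj : Function.Injective ψ := by
    rw [injective_iff_map_eq_zero]
    intro w hw
    ext j
    have := LinearMap.congr_fun hw (Pi.single j 1)
    simpa [hψ, single_dotProduct] using this
  set Φ : Submodule K (Module.Dual K (Fin N → K)) := S₂.map ψ with hΦ
  have hle : Φ ≤ S₁.dualAnnihilator := by
    rw [Submodule.map_le_iff_le_comap]
    intro w hw
    rw [Submodule.mem_comap, Submodule.mem_dualAnnihilator]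
    intro u hu
    exact horth u hu w hw
  have hle2 : S₁ ≤ Φ.dualCoannihilator :=
    Submodule.le_dualAnnihilator_iff_le_dualCoannihilator.mp hle
  have hrank2 : Module.finrank K Φ = Module.finrank K S₂ :=
    (LinearEquiv.finrank_eq (Submodule.equivMapOfInjective ψ hψinj S₂)).symm
  have hrank1 : Module.finrank K S₁ ≤ Module.finrank K Φ.dualCoannihilator :=
    Submodule.finrank_mono hle2
  have hsum := Subspace.finrank_add_finrank_dualCoannihilator_eq Φ
  have hN : Module.finrank K (Fin N → K) = N := by simp
  omega

variable {K : Type*} [Field K] [Fintype K]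

theorem main_bound : ∀ (n : ℕ) (V : AddSubgroup (Matrix (Fin n) (Fin n) K)),
    (∀ M ∈ V, IsNilpotent M) → Nat.card V ≤ (Fintype.card K) ^ n.choose 2 := by
  intro n
  induction n with
  | zero =>
    intro V hV
    have : Subsingleton (Matrix (Fin 0) (Fin 0) K) := by
      constructor; intro a b; ext i j; exact absurd i.2 (by omega)
    have h1 : Nat.card V = 1 := Nat.card_of_subsingleton (⟨0, zero_mem V⟩ : V)
    simp [h1]
  | succ m IH =>
    intro V hV
    set q := Fintype.card K with hq
    -- the column map
    set colHom : Matrix (Fin (m+1)) (Fin (m+1)) K →+ (Fin (m+1) → K) :=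
      { toFun := fun A => fun i => A i 0
        map_zero' := rfl
        map_add' := fun _ _ => rfl } with hcolHom
    set f := colHom.comp V.subtype with hf
    set I := f.range with hI
    set V₀ := f.ker with hV₀
    -- the block map
    set blk : Matrix (Fin (m+1)) (Fin (m+1)) K →+ Matrix (Fin m) (Fin m) K :=
      { toFun := fun A => A.submatrix Fin.succ Fin.succ
        map_zero' := rfl
        map_add' := fun _ _ => rfl } with hblk
    set g := blk.comp (V.subtype.comp V₀.subtype) with hg
    set V' := g.range with hV'
    -- the row map on ker g
    set rowHom : Matrix (Fin (m+1)) (Fin (m+1)) K →+ (Fin (m+1) → K) :=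
      { toFun := fun A => fun j => A 0 j
        map_zero' := rfl
        map_add' := fun _ _ => rfl } with hrowHom
    set h := rowHom.comp ((V.subtype.comp V₀.subtype).comp g.ker.subtype) with hh
    set R := h.range with hR
    -- basic membership facts
    have hcol0 : ∀ (x : V₀), ∀ i, ((x : V) : Matrix (Fin (m+1)) (Fin (m+1)) K) i 0 = 0 := by
      intro x i
      have := x.2
      rw [AddMonoidHom.mem_ker] at this
      exact congrFun this i
    have hker_entries : ∀ (x : g.ker), ∀ i j,
        ¬(i = 0 ∧ j ≠ 0) → (((x : V₀) : V) : Matrix (Fin (m+1)) (Fin (m+1)) K) i j = 0 := by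
      intro x i j hij
      have hxblk := x.2
      rw [AddMonoidHom.mem_ker] at hxblk
      rcases Fin.eq_zero_or_eq_succ j with hj | ⟨j', hj⟩
      · subst hj; exact hcol0 _ i
      · rcases Fin.eq_zero_or_eq_succ i with hi | ⟨i', hi⟩
        · exact absurd ⟨hi, by rw [hj]; exact (Fin.succ_ne_zero j')⟩ hij
        · subst hi hj
          exact congrFun (congrFun hxblk i') j'
    -- cardinalities via first isomorphism
    have card1 : Nat.card V = Nat.card V₀ * Nat.card I := card_hom f
    have card2 : Nat.card V₀ = Nat.card g.ker * Nat.card V' := card_hom g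
    -- elements of V' are nilpotent
    have hnil' : ∀ X ∈ V', IsNilpotent X := by
      rintro X ⟨x, rfl⟩
      obtain ⟨k, hk⟩ := hV _ ((x : V) : V).2
      refine ⟨k, ?_⟩
      have hcol : ∀ i, (((x : V) : Matrix (Fin (m+1)) (Fin (m+1)) K)) i 0 = 0 := hcol0 x
      have hbp := blk_pow _ hcol k
      have : g x = ((x : V) : Matrix (Fin (m+1)) (Fin (m+1)) K).submatrix Fin.succ Fin.succ := rfl
      rw [this, ← hbp, hk]
      ext i j
      simp [Matrix.submatrix_apply]
    -- orthogonality between row space R and column space I (via the trace lemma)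
    have horth0 : ∀ (y : g.ker) (x : V), (h y) ⬝ᵥ (f x) = 0 := by
      intro y x
      have hdot : (h y) ⬝ᵥ (f x)
          = trace ((((y : V₀) : V) : Matrix (Fin (m+1)) (Fin (m+1)) K)
              * ((x : Matrix (Fin (m+1)) (Fin (m+1)) K))) := by
        rw [Matrix.trace]
        rw [Fin.sum_univ_succ]
        have hrest : ∀ i : Fin m,
            ((((y : V₀) : V) : Matrix (Fin (m+1)) (Fin (m+1)) K)
              * ((x : Matrix (Fin (m+1)) (Fin (m+1)) K))).diag i.succ = 0 := by
          intro i
          rw [Matrix.diag_apply, Matrix.mul_apply]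
          refine Finset.sum_eq_zero fun j _ => ?_
          rw [hker_entries y i.succ j (by simp [Fin.succ_ne_zero]), zero_mul]
        rw [Finset.sum_eq_zero fun i _ => hrest i, add_zero]
        rw [Matrix.diag_apply, Matrix.mul_apply, dotProduct]
        rfl
      rw [hdot, Matrix.trace_mul_comm]
      refine trace_mul_eq_zero_of_nilpotent _ _ (hV _ x.2) (hV _ (((y : V₀) : V)).2) ?_
      exact hV _ (V.add_mem x.2 (((y : V₀) : V)).2)
    have hR0 : ∀ w ∈ R, w 0 = 0 := by
      rintro w ⟨y, rfl⟩
      exact hker_entries y 0 0 (by simp)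
    -- the spans
    set v : Fin (m+1) → K := Pi.single (0 : Fin (m+1)) (1 : K) with hv
    have hv0 : v ≠ 0 := by
      intro hx
      have := congrFun hx 0
      simp [hv] at this
    set S₁ : Submodule K (Fin (m+1) → K) := Submodule.span K ((I : Set (Fin (m+1) → K)) ∪ {v}) with hS₁
    set S₂ : Submodule K (Fin (m+1) → K) := Submodule.span K (R : Set (Fin (m+1) → K)) with hS₂
    have step1 : ∀ w ∈ R, ∀ u ∈ S₁, u ⬝ᵥ w = 0 := by
      intro w hw u hu
      rw [hS₁] at hu
      induction hu using Submodule.span_induction with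
      | mem u hu =>
        rcases hu with hu | hu
        · obtain ⟨x, rfl⟩ := hu
          obtain ⟨y, rfl⟩ := hw
          have := horth0 y x
          rwa [dotProduct_comm]
        · rw [Set.mem_singleton_iff] at hu
          subst hu
          have : v ⬝ᵥ w = w 0 := by
            rw [hv, single_dotProduct, one_mul]
          rw [this]
          exact hR0 w hw
      | zero => rw [zero_dotProduct]
      | add a b _ _ ha hb => rw [add_dotProduct, ha, hb, add_zero]
      | smul c a _ ha => rw [smul_dotProduct, ha, smul_zero]
    have horth : ∀ u ∈ S₁, ∀ w ∈ S₂, u ⬝ᵥ w = 0 := by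
      intro u hu w hw
      rw [hS₂] at hw
      induction hw using Submodule.span_induction with
      | mem w hwR => exact step1 w hwR u hu
      | zero => rw [dotProduct_zero]
      | add a b _ _ ha hb => rw [dotProduct_add, ha, hb, add_zero]
      | smul c a _ ha => rw [dotProduct_smul, ha, smul_zero]
    have hdim := dim_bound S₁ S₂ horth
    -- cardinality of submodules
    have cardS : ∀ S : Submodule K (Fin (m+1) → K), Nat.card S = q ^ (Module.finrank K S) := by
      intro S
      haveI : Fintype S := Fintype.ofFinite _
      rw [Nat.card_eq_fintype_card]
      exact card_eq_pow_finrank (K := K)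
    -- the line
    set L : Submodule K (Fin (m+1) → K) := Submodule.span K {v} with hL
    have cardL : Nat.card L = q := by
      rw [cardS L, hL, finrank_span_singleton hv0, pow_one]
    have hIL : ∀ x, x ∈ I → x ∈ L → x = 0 := by
      intro x hx hxL
      obtain ⟨a, rfl⟩ := hx
      obtain ⟨c, hc⟩ := Submodule.mem_span_singleton.mp hxL
      have hcol : ∀ i, ((a : Matrix (Fin (m+1)) (Fin (m+1)) K)) i 0 = c * v i := by
        intro i
        have := congrFun hc i
        rw [Pi.smul_apply, smul_eq_mul] at this
        exact this.symm
      have := col_zero_of_single _ (hV _ a.2) c hcol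
      ext i
      exact this i
    -- injection from I × L into S₁
    have cardIL : Nat.card I * q ≤ q ^ (Module.finrank K S₁) := by
      rw [← cardS S₁, ← cardL, ← Nat.card_prod]
      have hmem : ∀ z : I × L, (z.1 : Fin (m+1) → K) + (z.2 : Fin (m+1) → K) ∈ S₁ := by
        intro z
        refine Submodule.add_mem _ ?_ ?_
        · exact Submodule.subset_span (Set.mem_union_left _ z.1.2)
        · exact Submodule.span_mono (Set.subset_union_right) z.2.2
      refine Nat.card_le_card_of_injective
        (fun z : I × L => (⟨(z.1 : Fin (m+1) → K) + (z.2 : Fin (m+1) → K), hmem z⟩ : S₁)) ?_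
      rintro ⟨z1, z2⟩ ⟨w1, w2⟩ hzw
      rw [Subtype.mk.injEq] at hzw
      have key : (z1 : Fin (m+1) → K) - (w1 : Fin (m+1) → K) = 0 := by
        refine hIL _ (AddSubgroup.sub_mem I z1.2 w1.2) ?_
        have : (z1 : Fin (m+1) → K) - (w1 : Fin (m+1) → K)
            = (w2 : Fin (m+1) → K) - (z2 : Fin (m+1) → K) := by
          have := hzw
          abel_nf
          linear_combination (norm := abel_nf) this
        rw [this]
        exact Submodule.sub_mem _ w2.2 z2.2
      have h1 : z1 = w1 := by
        apply Subtype.ext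
        have := sub_eq_zero.mp key
        exact this
      have h2 : z2 = w2 := by
        apply Subtype.ext
        have := hzw
        rw [show (z1 : Fin (m+1) → K) = (w1 : Fin (m+1) → K) from congrArg _ h1] at this
        exact add_left_cancel this
      rw [h1, h2]
    have hRS : Nat.card R ≤ q ^ (Module.finrank K S₂) := by
      rw [← cardS S₂]
      exact Nat.card_mono (Set.toFinite _) Submodule.subset_span
    -- injectivity of the row map
    have hinj : Function.Injective h := by
      rw [injective_iff_map_eq_zero]
      intro y hy
      have hmat : (((y : V₀) : V) : Matrix (Fin (m+1)) (Fin (m+1)) K) = 0 := by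
        ext i j
        rcases Fin.eq_zero_or_eq_succ i with hi | ⟨i', hi⟩
        · subst hi
          have := congrFun hy j
          exact this
        · subst hi
          exact hker_entries y i'.succ j (by simp [Fin.succ_ne_zero])
      apply Subtype.ext; apply Subtype.ext; apply Subtype.ext
      exact hmat
    have cardker : Nat.card g.ker ≤ Nat.card R := by
      refine Nat.card_le_card_of_injective
        (fun y : g.ker => (⟨h y, ⟨y, rfl⟩⟩ : R)) ?_
      intro y y' e
      simp only [Subtype.mk.injEq] at e
      exact hinj (congrArg Subtype.val e)
    -- assemble
    have hIH := IH V' hnil'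
    have hqpos : 0 < q := Fintype.card_pos
    have hkey : Nat.card I * Nat.card R ≤ q ^ m := by
      have h1 : (Nat.card I * q) * Nat.card R ≤ q ^ (Module.finrank K S₁) * q ^ (Module.finrank K S₂) :=
        Nat.mul_le_mul cardIL hRS
      rw [← pow_add] at h1
      have h2 : q ^ (Module.finrank K S₁ + Module.finrank K S₂) ≤ q ^ (m + 1) :=
        Nat.pow_le_pow_right hqpos hdim
      have h3 : Nat.card I * Nat.card R * q ≤ q ^ m * q := by
        calc Nat.card I * Nat.card R * q = (Nat.card I * q) * Nat.card R := by ring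
        _ ≤ q ^ (Module.finrank K S₁ + Module.finrank K S₂) := h1
        _ ≤ q ^ (m + 1) := h2
        _ = q ^ m * q := by rw [pow_succ]
      exact Nat.le_of_mul_le_mul_right h3 hqpos
    calc Nat.card V = Nat.card g.ker * Nat.card V' * Nat.card I := by rw [card1, card2]
      _ ≤ Nat.card R * (q ^ m.choose 2) * Nat.card I :=
          Nat.mul_le_mul (Nat.mul_le_mul cardker hIH) le_rfl
      _ = (Nat.card I * Nat.card R) * q ^ m.choose 2 := by ring
      _ ≤ q ^ m * q ^ m.choose 2 := Nat.mul_le_mul_right _ hkey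
      _ = q ^ (m + m.choose 2) := by rw [pow_add]
      _ = q ^ ((m+1).choose 2) := by
          congr 1
          rw [Nat.choose_succ_succ]
          rw [Nat.choose_one_right]

end NilpotentMatrixAux

/-- An additive subgroup of nilpotent `n × n` matrices over a finite field of
cardinality `p` has at most `p ^ (n choose 2)` elements. -/
theorem stmt_4 (K : Type*) [Field K] [Fintype K] (p n : ℕ) (hp : Fintype.card K = p)
    (hn : 0 < n)
    (V : AddSubgroup (Matrix (Fin n) (Fin n) K))
    (hV : ∀ M ∈ V, IsNilpotent M) :
    Nat.card V ≤ p ^ n.choose 2 := by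
  rw [← hp]
  exact NilpotentMatrixAux.main_bound n V hV
end

section
/- Let K be a (commutative) field, n a positive integer, and A, B ∈ M_n(K) two nilpotent matrices such that A + B is also nilpotent. Then the trace of the product satisfies tr(A·B) = 0. -/
open Polynomial Matrix

/-- The reversed characteristic polynomial of a nilpotent matrix over a field is `1`. -/
lemma charpolyRev_eq_one_of_isNilpotent {K : Type*} [Field K] {m : ℕ}
    {M : Matrix (Fin m) (Fin m) K} (hM : IsNilpotent M) :
    M.charpolyRev = 1 := by
  obtain ⟨r, hr, hCr⟩ := Polynomial.isUnit_iff.mp (Matrix.isUnit_charpolyRev_of_isNilpotent hM)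
  have h0 : eval 0 M.charpolyRev = 1 := Matrix.eval_charpolyRev
  rw [← hCr, eval_C] at h0
  rw [← hCr, h0, _root_.map_one]

/-- If `M` is nilpotent over a field `K`, then `det (1 + s • M') = 1` in any `K`-algebra. -/
lemma det_one_add_smul_map_eq_one {K : Type*} [Field K] {m : ℕ}
    {M : Matrix (Fin m) (Fin m) K} (hM : IsNilpotent M)
    {S : Type*} [CommRing S] [Algebra K S] (s : S) :
    Matrix.det (1 + s • M.map (algebraMap K S)) = 1 := by
  have h1 : (-M).charpolyRev = 1 := charpolyRev_eq_one_of_isNilpotent hM.neg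
  have h2 : Matrix.det (1 + (X : K[X]) • M.map C) = 1 := by
    rw [← h1, Matrix.charpolyRev]
    congr 1
    ext i j
    simp [Matrix.map_apply, sub_eq_add_neg]
  have h3 := congrArg (aeval s : K[X] →ₐ[K] S) h2
  rw [_root_.map_one, ← RingHom.coe_coe (aeval s : K[X] →ₐ[K] S), RingHom.map_det] at h3
  rw [← h3]
  congr 1
  ext i j
  simp [Matrix.map_apply, Matrix.one_apply, apply_ite (aeval s : K[X] →ₐ[K] S)]
  try ring

/-- If `A`, `B` and `A + B` are nilpotent matrices over a commutative field, then
`tr (A * B) = 0`. -/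
theorem stmt_6 (K : Type*) [Field K] (n : ℕ) (hn : 0 < n)
    (A B : Matrix (Fin n) (Fin n) K)
    (hA : IsNilpotent A) (hB : IsNilpotent B) (hAB : IsNilpotent (A + B)) :
    Matrix.trace (A * B) = 0 := by
  classical
  set R' := AdjoinRoot (X ^ 3 : K[X]) with hR'
  set x : R' := AdjoinRoot.root _ with hx
  have hx3 : x ^ 3 = 0 := by
    rw [hx, ← AdjoinRoot.mk_X, ← map_pow, AdjoinRoot.mk_self]
  set ψ : R' →+* K := AdjoinRoot.lift (RingHom.id K) 0 (by simp) with hψ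
  have hψx : ψ x = 0 := AdjoinRoot.lift_root _
  have hker : ∀ r : R', ψ r = 0 → r * x ^ 2 = 0 := by
    intro r hr
    obtain ⟨q, rfl⟩ := AdjoinRoot.mk_surjective r
    rw [hψ, AdjoinRoot.lift_mk] at hr
    have hq : q.eval 0 = 0 := by simpa [eval] using hr
    obtain ⟨q₂, rfl⟩ : (X : K[X]) ∣ q := by
      simpa using (Polynomial.dvd_iff_isRoot (p := q) (a := 0)).mpr hq
    rw [hx, ← AdjoinRoot.mk_X, ← map_pow, ← _root_.map_mul]
    rw [show (X * q₂) * X ^ 2 = X ^ 3 * q₂ by ring, _root_.map_mul, AdjoinRoot.mk_self, zero_mul]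
  have hfaith : ∀ t : K, algebraMap K R' t * x ^ 2 = 0 → t = 0 := by
    intro t ht
    by_contra ht0
    rw [AdjoinRoot.algebraMap_eq, AdjoinRoot.of, RingHom.comp_apply, hx, ← AdjoinRoot.mk_X,
      ← map_pow, ← _root_.map_mul, AdjoinRoot.mk_eq_zero] at ht
    have hne : (C t * X ^ 2 : K[X]) ≠ 0 := by
      exact mul_ne_zero (C_ne_zero.mpr ht0) (pow_ne_zero _ X_ne_zero)
    have := Polynomial.degree_le_of_dvd ht hne
    rw [Polynomial.degree_X_pow, Polynomial.degree_C_mul_X_pow _ ht0] at this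
    exact absurd this (by norm_num)
  set A' : Matrix (Fin n) (Fin n) R' := A.map (algebraMap K R') with hA'
  set B' : Matrix (Fin n) (Fin n) R' := B.map (algebraMap K R') with hB'
  set M₁ : Matrix (Fin n) (Fin n) R' := A' + B' with hM₁
  set N : Matrix (Fin n) (Fin n) R' := A' * B' with hN
  set Cm : Matrix (Fin n) (Fin n) R' := M₁ + x • N with hCm
  have hdetA : Matrix.det (1 + x • A') = 1 := det_one_add_smul_map_eq_one hA x
  have hdetB : Matrix.det (1 + x • B') = 1 := det_one_add_smul_map_eq_one hB x
  have hABmap : (A + B).map (algebraMap K R') = M₁ := by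
    ext i j; simp [hM₁, hA', hB', Matrix.map_apply]
  have hdetM₁ : Matrix.det (1 + x • M₁) = 1 := by
    rw [← hABmap]; exact det_one_add_smul_map_eq_one hAB x
  have hprod : (1 : Matrix (Fin n) (Fin n) R') + x • Cm = (1 + x • A') * (1 + x • B') := by
    rw [hCm, hM₁, hN]
    simp only [mul_add, add_mul, mul_one, one_mul, smul_add, smul_smul, smul_mul_smul_comm]
    abel
  have hdetC : Matrix.det (1 + x • Cm) = 1 := by
    rw [hprod, det_mul, hdetA, hdetB, one_mul]
  have e1 := Matrix.det_one_add_smul x Cm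
  have e2 := Matrix.det_one_add_smul x M₁
  rw [hdetC] at e1
  rw [hdetM₁] at e2
  set gC : R' := (Matrix.det (1 + (X : R'[X]) • Cm.map C)).divX.divX.eval x with hgC
  set gM : R' := (Matrix.det (1 + (X : R'[X]) • M₁.map C)).divX.divX.eval x with hgM
  have E1 : Matrix.trace Cm * x + gC * x ^ 2 = 0 := by linear_combination -e1
  have E2 : Matrix.trace M₁ * x + gM * x ^ 2 = 0 := by linear_combination -e2
  have htr : Matrix.trace Cm = Matrix.trace M₁ + x * Matrix.trace N := by
    simp [hCm, Matrix.trace_add, Matrix.trace_smul, smul_eq_mul]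
  -- ψ kills the difference of the junk terms
  have hmapCM : Cm.map ψ = M₁.map ψ := by
    ext i j
    simp [hCm, Matrix.map_apply, Matrix.add_apply, Matrix.smul_apply, smul_eq_mul, hψx]
  have hψeval : ∀ (P : Matrix (Fin n) (Fin n) R'),
      ψ ((Matrix.det (1 + (X : R'[X]) • P.map C)).divX.divX.eval x)
        = (Matrix.det (1 + (X : K[X]) • (P.map ψ).map C)).coeff 2 := by
    intro P
    have h1 : ∀ p : R'[X], ψ (p.eval x) = ψ (p.coeff 0) := by
      intro p
      rw [eval, Polynomial.hom_eval₂, hψx]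
      rw [Polynomial.eval₂_at_zero]
      simp
    rw [h1, Polynomial.coeff_divX, Polynomial.coeff_divX]
    have h2 : (Matrix.det (1 + (X : R'[X]) • P.map C)).map ψ
        = Matrix.det (1 + (X : K[X]) • (P.map ψ).map C) := by
      rw [← Polynomial.coe_mapRingHom, RingHom.map_det]
      congr 1
      ext i j
      simp [Matrix.map_apply, Matrix.one_apply, apply_ite (Polynomial.mapRingHom ψ)]
      split_ifs <;> simp [Polynomial.coeff_one, apply_ite ψ]
    calc ψ ((Matrix.det (1 + (X : R'[X]) • P.map C)).coeff 2)
        = ((Matrix.det (1 + (X : R'[X]) • P.map C)).map ψ).coeff 2 := by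
          rw [Polynomial.coeff_map]
      _ = (Matrix.det (1 + (X : K[X]) • (P.map ψ).map C)).coeff 2 := by rw [h2]
  have hψg : ψ gC = ψ gM := by
    rw [hgC, hgM, hψeval, hψeval, hmapCM]
  have h4 : (gC - gM) * x ^ 2 = 0 := hker _ (by rw [_root_.map_sub, hψg, sub_self])
  have h3 : Matrix.trace N * x ^ 2 = 0 := by
    linear_combination E1 - E2 - h4 - x * htr
  have h5 : Matrix.trace N = algebraMap K R' (Matrix.trace (A * B)) := by
    rw [hN, hA', hB', ← Matrix.map_mul]
    simp [Matrix.trace, Matrix.diag, Matrix.map_apply]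
  apply hfaith
  rw [← h5]
  exact h3
end

section
/- Let K be a division ring and n a positive integer. Let V be a subset of M_n(K) that is closed under addition and consists only of nilpotent matrices. Then there exists an index i ∈ {1,…,n} such that the only matrix M ∈ V all of whose rows other than the i-th row are zero is M = 0. (Equivalently: some canonical basis vector e_i of the right K-vector space K^n is V-adapted, meaning no matrix of V has e_i·K as its column space.) -/
/-- A nonempty sum of elements of an addition-closed set stays in the set. -/
lemma stmt_8_sum_mem {α M : Type*} [AddCommMonoid M] {V : Set M}
    (hadd : ∀ A ∈ V, ∀ B ∈ V, A + B ∈ V) (s : Finset α) (g : α → M)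
    (hs : s.Nonempty) (hg : ∀ i ∈ s, g i ∈ V) : ∑ i ∈ s, g i ∈ V := by
  classical
  induction s using Finset.induction_on with
  | empty => exact absurd hs (by simp)
  | @insert a s ha ih =>
    rw [Finset.sum_insert ha]
    by_cases hse : s.Nonempty
    · exact hadd _ (hg a (Finset.mem_insert_self a s)) _
        (ih hse fun i hi => hg i (Finset.mem_insert_of_mem hi))
    · have : s = ∅ := Finset.not_nonempty_iff_eq_empty.1 hse
      subst this
      simpa using hg a (Finset.mem_insert_self a ∅)

/-- Key lemma: if `V ⊆ M_n(K)` is closed under addition and consists of nilpotent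
matrices, then some index `i` is such that the only matrix of `V` whose rows other
than the `i`-th vanish is the zero matrix (i.e. `e_i` is `V`-adapted). -/
theorem stmt_8 (K : Type*) [DivisionRing K] (n : ℕ) (hn : 0 < n)
    (V : Set (Matrix (Fin n) (Fin n) K))
    (hadd : ∀ A ∈ V, ∀ B ∈ V, A + B ∈ V)
    (hnil : ∀ M ∈ V, IsNilpotent M) :
    ∃ i : Fin n, ∀ M ∈ V, (∀ j : Fin n, j ≠ i → ∀ k : Fin n, M j k = 0) → M = 0 := by
  classical
  by_contra hcon
  push_neg at hcon
  choose N hNV hNrow hNne using hcon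
  -- the diagonal entry of each `N i` vanishes
  have hdiag : ∀ i, N i i i = 0 := by
    intro i
    have hpow : ∀ m, (N i ^ m) i i = (N i i i) ^ m := by
      intro m
      induction m with
      | zero => simp [Matrix.one_apply]
      | succ m ih =>
        rw [pow_succ, pow_succ, Matrix.mul_apply]
        rw [Finset.sum_eq_single i]
        · rw [ih]
        · intro b _ hb
          rw [hNrow i b hb i, mul_zero]
        · simp
    obtain ⟨k, hk⟩ := hnil (N i) (hNV i)
    have hz : (N i i i) ^ k = 0 := by
      rw [← hpow, hk]; rfl
    exact IsNilpotent.eq_zero ⟨k, hz⟩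
  -- each `N i` has a nonzero entry on row `i`
  have hout : ∀ i, ∃ j, N i i j ≠ 0 := by
    intro i
    by_contra h
    push_neg at h
    apply hNne i
    ext j k
    by_cases hj : j = i
    · subst hj; exact h k
    · exact hNrow i j hj k
  -- the "good subset" predicate
  set P : Finset (Fin n) → Prop :=
    fun s => s.Nonempty ∧ ∀ i ∈ s, ∃ j ∈ s, N i i j ≠ 0 with hP
  have hPuniv : P Finset.univ := by
    haveI : Nonempty (Fin n) := ⟨⟨0, hn⟩⟩
    refine ⟨Finset.univ_nonempty, fun i _ => ?_⟩
    obtain ⟨j, hj⟩ := hout i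
    exact ⟨j, Finset.mem_univ j, hj⟩
  -- choose a minimal such subset
  have hQex : ∃ m, ∃ s, P s ∧ s.card = m := ⟨_, Finset.univ, hPuniv, rfl⟩
  obtain ⟨S, hPS, hScard⟩ := Nat.find_spec hQex
  have hmin : ∀ T, P T → S.card ≤ T.card := by
    intro T hT
    rw [hScard]
    exact Nat.find_min' hQex ⟨T, hT, rfl⟩
  -- the successor function on S
  have hF0 : ∀ i ∈ S, ∃ j ∈ S, N i i j ≠ 0 := hPS.2
  set F : Fin n → Fin n := fun i =>
    if h : i ∈ S then (hF0 i h).choose else i with hFdef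
  have hF1 : ∀ i ∈ S, F i ∈ S := by
    intro i hi
    simp only [hFdef, dif_pos hi]
    exact (hF0 i hi).choose_spec.1
  have hF2 : ∀ i ∈ S, N i i (F i) ≠ 0 := by
    intro i hi
    simp only [hFdef, dif_pos hi]
    exact (hF0 i hi).choose_spec.2
  have hFne : ∀ i ∈ S, F i ≠ i := by
    intro i hi h
    exact hF2 i hi (by rw [h]; exact hdiag i)
  -- orbits of F within S
  have horbS : ∀ x ∈ S, ∀ t, F^[t] x ∈ S := by
    intro x hx t
    induction t with
    | zero => exact hx
    | succ t ih => rw [Function.iterate_succ_apply']; exact hF1 _ ih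
  have horb : ∀ x ∈ S, ∀ y ∈ S, ∃ t, F^[t] x = y := by
    intro x hx y hy
    set O : Finset (Fin n) := Finset.univ.filter (fun y => ∃ t, F^[t] x = y) with hO
    have hOsub : O ⊆ S := by
      intro z hz
      obtain ⟨t, ht⟩ := (Finset.mem_filter.1 hz).2
      exact ht ▸ horbS x hx t
    have hmemO : ∀ z, (∃ t, F^[t] x = z) → z ∈ O := by
      intro z hz
      exact Finset.mem_filter.2 ⟨Finset.mem_univ z, hz⟩
    have hPO : P O := by
      constructor
      · exact ⟨x, hmemO x ⟨0, rfl⟩⟩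
      · intro z hz
        obtain ⟨t, ht⟩ := (Finset.mem_filter.1 hz).2
        have hzS : z ∈ S := hOsub hz
        refine ⟨F z, hmemO (F z) ⟨t + 1, ?_⟩, hF2 z hzS⟩
        rw [Function.iterate_succ_apply', ht]
    have hOS : O = S := Finset.eq_of_subset_of_card_le hOsub (hmin O hPO)
    have hyO : y ∈ O := by rw [hOS]; exact hy
    exact (Finset.mem_filter.1 hyO).2
  -- F is surjective, hence injective, on S
  have himg : S.image F = S := by
    apply Finset.eq_of_subset_of_card_le
    · intro z hz
      obtain ⟨w, hw, hwz⟩ := Finset.mem_image.1 hz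
      exact hwz ▸ hF1 w hw
    · apply hmin
      constructor
      · obtain ⟨x, hx⟩ := hPS.1
        exact ⟨F x, Finset.mem_image_of_mem F hx⟩
      · intro z hz
        obtain ⟨w, hw, hwz⟩ := Finset.mem_image.1 hz
        have hzS : z ∈ S := hwz ▸ hF1 w hw
        exact ⟨F z, Finset.mem_image_of_mem F hzS, hF2 z hzS⟩
  have hinj : Set.InjOn F S :=
    Finset.injOn_of_card_image_eq (by rw [himg])
  -- minimality: the only nonzero entry of row i of N i within S is at F i
  have hchord : ∀ i ∈ S, ∀ j ∈ S, N i i j ≠ 0 → j = F i := by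
    intro i hi j hj hij
    by_contra hne
    have hPT : P (S.erase (F i)) := by
      constructor
      · exact ⟨i, Finset.mem_erase.2 ⟨fun h => hFne i hi h.symm, hi⟩⟩
      · intro x hx
        obtain ⟨hxFi, hxS⟩ := Finset.mem_erase.1 hx
        by_cases hxi : x = i
        · subst hxi
          exact ⟨j, Finset.mem_erase.2 ⟨hne, hj⟩, hij⟩
        · refine ⟨F x, Finset.mem_erase.2 ⟨fun h => hxi (hinj hxS hi h), hF1 x hxS⟩,
            hF2 x hxS⟩
    have h1 := hmin _ hPT
    have h2 : (S.erase (F i)).card < S.card :=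
      Finset.card_erase_lt_of_mem (hF1 i hi)
    omega
  -- the sum of the N i over S
  set M : Matrix (Fin n) (Fin n) K := ∑ i ∈ S, N i with hM
  have hMV : M ∈ V := stmt_8_sum_mem hadd S N hPS.1 (fun i _ => hNV i)
  have hMrow : ∀ i ∈ S, ∀ k, M i k = N i i k := by
    intro i hi k
    rw [hM, Matrix.sum_apply]
    rw [Finset.sum_eq_single i]
    · intro b _ hb
      exact hNrow b i (fun h => hb h.symm) k
    · intro h; exact absurd hi h
  have hMrow0 : ∀ r, r ∉ S → ∀ k, M r k = 0 := by
    intro r hr k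
    rw [hM, Matrix.sum_apply]
    apply Finset.sum_eq_zero
    intro b hb
    exact hNrow b r (fun h => hr (h ▸ hb)) k
  have hMpowrow0 : ∀ r, r ∉ S → ∀ m, ∀ k, (M ^ (m + 1)) r k = 0 := by
    intro r hr m k
    rw [pow_succ', Matrix.mul_apply]
    apply Finset.sum_eq_zero
    intro b _
    rw [hMrow0 r hr b, zero_mul]
  -- key induction: all powers of M are nonzero
  have key : ∀ m, ∀ i ∈ S, ∃ j ∈ S, (M ^ (m + 1)) i j ≠ 0 := by
    intro m
    induction m with
    | zero =>
      intro i hi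
      refine ⟨F i, hF1 i hi, ?_⟩
      rw [pow_one, hMrow i hi]
      exact hF2 i hi
    | succ m ih =>
      intro i hi
      obtain ⟨j, hjS, hj⟩ := ih (F i) (hF1 i hi)
      refine ⟨j, hjS, ?_⟩
      rw [pow_succ', Matrix.mul_apply, Finset.sum_eq_single (F i)]
      · apply mul_ne_zero _ hj
        rw [hMrow i hi]
        exact hF2 i hi
      · intro b _ hb
        by_cases hbS : b ∈ S
        · have : M i b = 0 := by
            rw [hMrow i hi]
            by_contra h
            exact hb (hchord i hi b hbS h)
          rw [this, zero_mul]
        · rw [hMpowrow0 b hbS m j, mul_zero]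
      · intro h; exact absurd (Finset.mem_univ (F i)) h
  -- contradiction with nilpotency
  obtain ⟨k, hk⟩ := hnil M hMV
  obtain ⟨i0, hi0⟩ := hPS.1
  cases k with
  | zero =>
    have : (M ^ 0) i0 i0 = 0 := by rw [hk]; rfl
    rw [pow_zero, Matrix.one_apply_eq] at this
    exact one_ne_zero this
  | succ m =>
    obtain ⟨j, _, hj⟩ := key m i0 hi0
    exact hj (by rw [hk]; rfl)
end

section
/- Let K be a division ring and let A, B be nonzero nilpotent matrices in M_2(K) such that A + B is nilpotent. Then A and B have the same kernel: for every vector x ∈ K^2 (where matrices act by (M·x)_i = Σ_j M_{ij} x_j), one has A·x = 0 if and only if B·x = 0. -/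
open Matrix

section Aux

variable {K : Type*} [DivisionRing K]

private lemma mulVec_apply' (M : Matrix (Fin 2) (Fin 2) K) (x : Fin 2 → K) (i : Fin 2) :
    M.mulVec x i = M i 0 * x 0 + M i 1 * x 1 := by
  simp [Matrix.mulVec, dotProduct, Fin.sum_univ_two]

/-- right scalar multiple -/
private lemma mulVec_smulR (M : Matrix (Fin 2) (Fin 2) K) (x : Fin 2 → K) (c : K) :
    M.mulVec (fun i => x i * c) = fun i => M.mulVec x i * c := by
  funext i
  simp [Matrix.mulVec, dotProduct, Fin.sum_univ_two, add_mul, mul_assoc]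

private lemma exists_vec (M : Matrix (Fin 2) (Fin 2) K) (hM : M ≠ 0) :
    ∃ x : Fin 2 → K, M.mulVec x ≠ 0 := by
  by_contra h
  push_neg at h
  apply hM
  ext i j
  have := congrFun (h (Pi.single j 1)) i
  simpa using this

private lemma eq_zero_of_mulVec (M : Matrix (Fin 2) (Fin 2) K)
    (h : ∀ x : Fin 2 → K, M.mulVec x = 0) : M = 0 := by
  ext i j
  have := congrFun (h (Pi.single j 1)) i
  simpa using this

private lemma vec_ne_zero {v : Fin 2 → K} (hv : v ≠ 0) : v 0 ≠ 0 ∨ v 1 ≠ 0 := by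
  by_contra h
  push_neg at h
  exact hv (funext fun i => by fin_cases i <;> simp [h.1, h.2])

/-- the kernel of a nonzero matrix is (at most) a line -/
private lemma ker_line (M : Matrix (Fin 2) (Fin 2) K) (hM : M ≠ 0)
    {v w : Fin 2 → K} (hv : v ≠ 0) (hMv : M.mulVec v = 0) (hMw : M.mulVec w = 0) :
    ∃ c : K, w = fun i => v i * c := by
  have hv' : ∀ i : Fin 2, M i 0 * v 0 + M i 1 * v 1 = 0 := fun i => by
    rw [← mulVec_apply' M v i, hMv]; rfl
  have hw' : ∀ i : Fin 2, M i 0 * w 0 + M i 1 * w 1 = 0 := fun i => by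
    rw [← mulVec_apply' M w i, hMw]; rfl
  rcases vec_ne_zero hv with h0 | h1
  · refine ⟨(v 0)⁻¹ * w 0, ?_⟩
    have hw0 : w 0 = v 0 * ((v 0)⁻¹ * w 0) := (mul_inv_cancel_left₀ h0 _).symm
    have key : ∀ i : Fin 2, M i 1 * (w 1 - v 1 * ((v 0)⁻¹ * w 0)) = 0 := by
      intro i
      have h1' := hv' i
      have h2' := hw' i
      have h3' : M i 0 * (v 0 * ((v 0)⁻¹ * w 0)) + M i 1 * (v 1 * ((v 0)⁻¹ * w 0)) = 0 := by
        have := congrArg (· * ((v 0)⁻¹ * w 0)) h1'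
        simpa [add_mul, mul_assoc] using this
      rw [hw0] at h2'
      rw [mul_sub]
      have : M i 1 * w 1 = M i 1 * (v 1 * ((v 0)⁻¹ * w 0)) := by
        have e := sub_eq_zero.mpr (h2'.trans h3'.symm)
        rw [add_sub_add_left_eq_sub] at e
        exact sub_eq_zero.mp e
      rw [this, sub_self]
    by_cases ht : w 1 - v 1 * ((v 0)⁻¹ * w 0) = 0
    · funext i
      fin_cases i
      · simpa using hw0
      · simpa using sub_eq_zero.mp ht
    · exfalso
      apply hM
      ext i j
      have hMi1 : M i 1 = 0 := (mul_eq_zero.mp (key i)).resolve_right ht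
      have hMi0 : M i 0 = 0 := by
        have := hv' i
        rw [hMi1, zero_mul, add_zero] at this
        exact (mul_eq_zero.mp this).resolve_right h0
      fin_cases j <;> simp [hMi0, hMi1]
  · refine ⟨(v 1)⁻¹ * w 1, ?_⟩
    have hw1 : w 1 = v 1 * ((v 1)⁻¹ * w 1) := (mul_inv_cancel_left₀ h1 _).symm
    have key : ∀ i : Fin 2, M i 0 * (w 0 - v 0 * ((v 1)⁻¹ * w 1)) = 0 := by
      intro i
      have h1' := hv' i
      have h2' := hw' i
      have h3' : M i 0 * (v 0 * ((v 1)⁻¹ * w 1)) + M i 1 * (v 1 * ((v 1)⁻¹ * w 1)) = 0 := by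
        have := congrArg (· * ((v 1)⁻¹ * w 1)) h1'
        simpa [add_mul, mul_assoc] using this
      rw [hw1] at h2'
      rw [mul_sub]
      have : M i 0 * w 0 = M i 0 * (v 0 * ((v 1)⁻¹ * w 1)) := by
        have e := sub_eq_zero.mpr (h2'.trans h3'.symm)
        rw [add_sub_add_right_eq_sub] at e
        exact sub_eq_zero.mp e
      rw [this, sub_self]
    by_cases ht : w 0 - v 0 * ((v 1)⁻¹ * w 1) = 0
    · funext i
      fin_cases i
      · simpa using sub_eq_zero.mp ht
      · simpa using hw1
    · exfalso
      apply hM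
      ext i j
      have hMi0 : M i 0 = 0 := (mul_eq_zero.mp (key i)).resolve_right ht
      have hMi1 : M i 1 = 0 := by
        have := hv' i
        rw [hMi0, zero_mul, zero_add] at this
        exact (mul_eq_zero.mp this).resolve_right h1
      fin_cases j <;> simp [hMi0, hMi1]

/-- two independent vectors span the plane -/
private lemma spans {u v : Fin 2 → K} (hv : v ≠ 0)
    (hind : ∀ c : K, u ≠ fun i => v i * c) (y : Fin 2 → K) :
    ∃ a b : K, ∀ i, y i = u i * b + v i * a := by
  rcases vec_ne_zero hv with h0 | h1
  · have hd : u 1 - v 1 * ((v 0)⁻¹ * u 0) ≠ 0 := by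
      intro hd0
      apply hind ((v 0)⁻¹ * u 0)
      funext i
      fin_cases i
      · simpa using (mul_inv_cancel_left₀ h0 (u 0)).symm
      · simpa using sub_eq_zero.mp hd0
    refine ⟨(v 0)⁻¹ * y 0 - ((v 0)⁻¹ * u 0) *
        ((u 1 - v 1 * ((v 0)⁻¹ * u 0))⁻¹ * (y 1 - v 1 * ((v 0)⁻¹ * y 0))),
      (u 1 - v 1 * ((v 0)⁻¹ * u 0))⁻¹ * (y 1 - v 1 * ((v 0)⁻¹ * y 0)), fun i => ?_⟩
    have e1 : v 0 * ((v 0)⁻¹ * y 0) = y 0 := mul_inv_cancel_left₀ h0 _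
    have e2 : v 0 * ((v 0)⁻¹ * u 0) = u 0 := mul_inv_cancel_left₀ h0 _
    have e3 : (u 1 - v 1 * ((v 0)⁻¹ * u 0)) *
        ((u 1 - v 1 * ((v 0)⁻¹ * u 0))⁻¹ * (y 1 - v 1 * ((v 0)⁻¹ * y 0)))
        = y 1 - v 1 * ((v 0)⁻¹ * y 0) := mul_inv_cancel_left₀ hd _
    fin_cases i
    · show y 0 = u 0 * _ + v 0 * ((v 0)⁻¹ * y 0 - ((v 0)⁻¹ * u 0) * _)
      have expand : ∀ b : K, u 0 * b + v 0 * ((v 0)⁻¹ * y 0 - ((v 0)⁻¹ * u 0) * b)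
          = (u 0 - v 0 * ((v 0)⁻¹ * u 0)) * b + v 0 * ((v 0)⁻¹ * y 0) := by
        intro b; noncomm_ring
      rw [expand, e2, e1]
      noncomm_ring
    · show y 1 = u 1 * _ + v 1 * ((v 0)⁻¹ * y 0 - ((v 0)⁻¹ * u 0) * _)
      have expand : ∀ b : K, u 1 * b + v 1 * ((v 0)⁻¹ * y 0 - ((v 0)⁻¹ * u 0) * b)
          = (u 1 - v 1 * ((v 0)⁻¹ * u 0)) * b + v 1 * ((v 0)⁻¹ * y 0) := by
        intro b; noncomm_ring
      rw [expand, e3]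
      noncomm_ring
  · have hd : u 0 - v 0 * ((v 1)⁻¹ * u 1) ≠ 0 := by
      intro hd0
      apply hind ((v 1)⁻¹ * u 1)
      funext i
      fin_cases i
      · simpa using sub_eq_zero.mp hd0
      · simpa using (mul_inv_cancel_left₀ h1 (u 1)).symm
    refine ⟨(v 1)⁻¹ * y 1 - ((v 1)⁻¹ * u 1) *
        ((u 0 - v 0 * ((v 1)⁻¹ * u 1))⁻¹ * (y 0 - v 0 * ((v 1)⁻¹ * y 1))),
      (u 0 - v 0 * ((v 1)⁻¹ * u 1))⁻¹ * (y 0 - v 0 * ((v 1)⁻¹ * y 1)), fun i => ?_⟩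
    have e1 : v 1 * ((v 1)⁻¹ * y 1) = y 1 := mul_inv_cancel_left₀ h1 _
    have e2 : v 1 * ((v 1)⁻¹ * u 1) = u 1 := mul_inv_cancel_left₀ h1 _
    have e3 : (u 0 - v 0 * ((v 1)⁻¹ * u 1)) *
        ((u 0 - v 0 * ((v 1)⁻¹ * u 1))⁻¹ * (y 0 - v 0 * ((v 1)⁻¹ * y 1)))
        = y 0 - v 0 * ((v 1)⁻¹ * y 1) := mul_inv_cancel_left₀ hd _
    fin_cases i
    · show y 0 = u 0 * _ + v 0 * ((v 1)⁻¹ * y 1 - ((v 1)⁻¹ * u 1) * _)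
      have expand : ∀ b : K, u 0 * b + v 0 * ((v 1)⁻¹ * y 1 - ((v 1)⁻¹ * u 1) * b)
          = (u 0 - v 0 * ((v 1)⁻¹ * u 1)) * b + v 0 * ((v 1)⁻¹ * y 1) := by
        intro b; noncomm_ring
      rw [expand, e3]
      noncomm_ring
    · show y 1 = u 1 * _ + v 1 * ((v 1)⁻¹ * y 1 - ((v 1)⁻¹ * u 1) * _)
      have expand : ∀ b : K, u 1 * b + v 1 * ((v 1)⁻¹ * y 1 - ((v 1)⁻¹ * u 1) * b)
          = (u 1 - v 1 * ((v 1)⁻¹ * u 1)) * b + v 1 * ((v 1)⁻¹ * y 1) := by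
        intro b; noncomm_ring
      rw [expand, e2, e1]
      noncomm_ring

private lemma pow_step (M : Matrix (Fin 2) (Fin 2) K) (n : ℕ) (h : M ^ (n + 3) = 0) :
    M ^ (n + 2) = 0 := by
  by_contra hne
  obtain ⟨x, hx⟩ := exists_vec _ hne
  set v : Fin 2 → K := (M ^ (n + 2)).mulVec x with hvdef
  set u : Fin 2 → K := (M ^ (n + 1)).mulVec x with hudef
  have hMu : M.mulVec u = v := by
    rw [hudef, hvdef, Matrix.mulVec_mulVec, ← pow_succ']
  have hMv : M.mulVec v = 0 := by
    rw [hvdef, Matrix.mulVec_mulVec, ← pow_succ', h, Matrix.zero_mulVec]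
  have hv : v ≠ 0 := hx
  have hind : ∀ c : K, u ≠ fun i => v i * c := by
    intro c hu
    apply hv
    rw [← hMu, hu, mulVec_smulR, hMv]
    funext i; simp
  apply hne
  apply eq_zero_of_mulVec
  intro y
  obtain ⟨a, b, hab⟩ := spans hv hind y
  have hy : y = (fun i => u i * b) + fun i => v i * a := funext fun i => hab i
  have h1 : (M ^ (n + 2)).mulVec u = 0 := by
    rw [hudef, Matrix.mulVec_mulVec, ← pow_add]
    have he : n + 2 + (n + 1) = (n + 3) + n := by ring
    rw [he, pow_add, h, zero_mul, Matrix.zero_mulVec]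
  have h2 : (M ^ (n + 2)).mulVec v = 0 := by
    rw [hvdef, Matrix.mulVec_mulVec, ← pow_add]
    have he : n + 2 + (n + 2) = (n + 3) + (n + 1) := by ring
    rw [he, pow_add, h, zero_mul, Matrix.zero_mulVec]
  rw [hy, Matrix.mulVec_add, mulVec_smulR, mulVec_smulR, h1, h2]
  funext i; simp

private lemma sq_zero (M : Matrix (Fin 2) (Fin 2) K) (hM : IsNilpotent M) : M ^ 2 = 0 := by
  obtain ⟨k, hk⟩ := hM
  have key : ∀ n : ℕ, M ^ (n + 2) = 0 → M ^ 2 = 0 := by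
    intro n
    induction n with
    | zero => exact id
    | succ m ih => exact fun h => ih (pow_step M m h)
  cases k with
  | zero =>
    rw [pow_zero] at hk
    exact absurd hk one_ne_zero
  | succ k' =>
    cases k' with
    | zero =>
      rw [pow_one] at hk
      rw [hk]
      simp
    | succ n => exact key n hk

private lemma main_dir (A B : Matrix (Fin 2) (Fin 2) K) (hA0 : A ≠ 0)
    (hA2 : A ^ 2 = 0) (hB2 : B ^ 2 = 0) (hAB2 : (A + B) ^ 2 = 0)
    (x : Fin 2 → K) (hx : A.mulVec x = 0) : B.mulVec x = 0 := by
  by_cases hx0 : x = 0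
  · rw [hx0, Matrix.mulVec_zero]
  have hexp : (A + B) ^ 2 = A ^ 2 + (A * B + B * A) + B ^ 2 := by noncomm_ring
  rw [hAB2, hA2, hB2, zero_add, add_zero] at hexp
  have hanti : A * B = -(B * A) := eq_neg_of_add_eq_zero_left hexp.symm
  have hABx : A.mulVec (B.mulVec x) = 0 := by
    rw [Matrix.mulVec_mulVec, hanti, Matrix.neg_mulVec, ← Matrix.mulVec_mulVec, hx,
      Matrix.mulVec_zero, neg_zero]
  obtain ⟨c, hc⟩ := ker_line A hA0 hx0 hx hABx
  have hB2x : B.mulVec (B.mulVec x) = 0 := by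
    rw [Matrix.mulVec_mulVec, ← pow_two, hB2, Matrix.zero_mulVec]
  rw [hc, mulVec_smulR, hc] at hB2x
  have hcc : ∀ i, x i * c * c = 0 := fun i => by
    have := congrFun hB2x i
    simpa using this
  have hc0 : c = 0 := by
    by_contra hcne
    apply hx0
    funext i
    have := hcc i
    rcases mul_eq_zero.mp this with h | h
    · rcases mul_eq_zero.mp h with h' | h'
      · exact h'
      · exact absurd h' hcne
    · exact absurd h hcne
  rw [hc, hc0]
  funext i; simp

end Aux

/-- If `A`, `B` are nonzero nilpotent `2 × 2` matrices over a division ring such that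
`A + B` is nilpotent, then `A` and `B` have the same kernel. -/
theorem stmt_9 (K : Type*) [DivisionRing K]
    (A B : Matrix (Fin 2) (Fin 2) K) (hA0 : A ≠ 0) (hB0 : B ≠ 0)
    (hA : IsNilpotent A) (hB : IsNilpotent B) (hAB : IsNilpotent (A + B)) :
    ∀ x : Fin 2 → K, A.mulVec x = 0 ↔ B.mulVec x = 0 := by
  have hA2 := sq_zero A hA
  have hB2 := sq_zero B hB
  have hAB2 := sq_zero (A + B) hAB
  intro x
  constructor
  · exact main_dir A B hA0 hA2 hB2 hAB2 x
  · exact main_dir B A hB0 hB2 hA2 (by rwa [add_comm]) x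
end

section
/- Let K be a division ring, K0 a field contained in the center of K over which K has finite dimension q, and n a positive integer. If W is a K0-linear subspace of M_n(K) all of whose elements are nilpotent matrices, and W contains every strictly upper-triangular n×n matrix over K, then W is exactly the set NT_n(K) of strictly upper-triangular matrices. -/
section Aux

variable {K : Type*} [DivisionRing K] {n : ℕ}

/-- For a lower-triangular matrix, the diagonal entries of powers are powers of
the diagonal entries, and the strictly-upper entries of powers vanish. -/
lemma aux_lower_diag (L : Matrix (Fin n) (Fin n) K)
    (hL : ∀ r s : Fin n, (r : ℕ) < (s : ℕ) → L r s = 0) (j : Fin n) (k : ℕ) :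
    (L ^ k) j j = (L j j) ^ k ∧ ∀ s : Fin n, (j : ℕ) < (s : ℕ) → (L ^ k) j s = 0 := by
  induction k with
  | zero =>
    refine ⟨by simp, fun s hs => ?_⟩
    rw [pow_zero]
    exact Matrix.one_apply_ne (fun h => by rw [h] at hs; exact lt_irrefl _ hs)
  | succ k ih =>
    constructor
    · rw [pow_succ, Matrix.mul_apply, Finset.sum_eq_single j]
      · rw [ih.1, pow_succ]
      · intro r _ hr
        rcases lt_trichotomy (r : ℕ) (j : ℕ) with h | h | h
        · rw [hL r j h, mul_zero]
        · exact absurd (Fin.ext h) hr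
        · rw [ih.2 r h, zero_mul]
      · intro h; exact absurd (Finset.mem_univ j) h
    · intro s hs
      rw [pow_succ, Matrix.mul_apply]
      apply Finset.sum_eq_zero
      intro r _
      rcases lt_trichotomy (r : ℕ) (j : ℕ) with h | h | h
      · rw [hL r s (by omega), mul_zero]
      · rw [hL r s (by omega), mul_zero]
      · rw [ih.2 r h, zero_mul]

/-- The key combinatorial lemma: if every nonzero entry of `P` either drops the
index by at least `d`, or is the special corner entry at `(j, i)` with
`i = j + d`, and the two corner entries multiply to `1`, then all even powers
of `P` have a `1` at `(j, j)`. -/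
lemma aux_corner (P : Matrix (Fin n) (Fin n) K) (j i : Fin n) (d : ℕ) (hd1 : 0 < d)
    (hd : (j : ℕ) + d = (i : ℕ))
    (hP : ∀ r s : Fin n, P r s ≠ 0 → (s : ℕ) + d ≤ (r : ℕ) ∨ (r = j ∧ s = i))
    (hca : P j i * P i j = 1) (k : ℕ) :
    (P ^ (2 * k)) j j = 1 := by
  have hji : (j : ℕ) < (i : ℕ) := by omega
  have hij_ne : i ≠ j := fun h => by rw [h] at hji; exact lt_irrefl _ hji
  have hzero : ∀ r s : Fin n, ¬((s : ℕ) + d ≤ (r : ℕ)) → ¬(r = j ∧ s = i) → P r s = 0 := by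
    intro r s h1 h2
    by_contra h
    rcases hP r s h with h' | h'
    · exact h1 h'
    · exact h2 h'
  suffices H : ∀ k : ℕ,
      (P ^ (2 * k)) j j = 1 ∧ ∀ s : Fin n, (j : ℕ) < (s : ℕ) → (P ^ (2 * k)) j s = 0 from (H k).1
  intro k
  induction k with
  | zero =>
    refine ⟨by simp, fun s hs => ?_⟩
    rw [mul_zero, pow_zero]
    exact Matrix.one_apply_ne (fun h => by rw [h] at hs; exact lt_irrefl _ hs)
  | succ k ih =>
    -- odd-power invariant
    have hodd : (P ^ (2 * k + 1)) j i = P j i ∧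
        ∀ s : Fin n, (j : ℕ) ≤ (s : ℕ) → s ≠ i → (P ^ (2 * k + 1)) j s = 0 := by
      constructor
      · rw [pow_succ, Matrix.mul_apply, Finset.sum_eq_single j]
        · rw [ih.1, one_mul]
        · intro r _ hr
          rcases lt_trichotomy (r : ℕ) (j : ℕ) with h | h | h
          · rw [hzero r i (by omega) (fun hc => hr hc.1), mul_zero]
          · exact absurd (Fin.ext h) hr
          · rw [ih.2 r h, zero_mul]
        · intro h; exact absurd (Finset.mem_univ j) h
      · intro s hs hsi
        rw [pow_succ, Matrix.mul_apply]
        apply Finset.sum_eq_zero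
        intro r _
        rcases lt_trichotomy (r : ℕ) (j : ℕ) with h | h | h
        · rw [hzero r s (by omega) (fun hc => hsi hc.2), mul_zero]
        · have hrj : r = j := Fin.ext h
          subst hrj
          rw [hzero r s (by omega) (fun hc => hsi hc.2), mul_zero]
        · rw [ih.2 r h, zero_mul]
    have h2 : 2 * (k + 1) = (2 * k + 1) + 1 := by ring
    constructor
    · rw [h2, pow_succ, Matrix.mul_apply, Finset.sum_eq_single i]
      · rw [hodd.1, hca]
      · intro r _ hr
        rcases lt_trichotomy (r : ℕ) (j : ℕ) with h | h | h
        · rw [hzero r j (by omega) (fun hc => hij_ne hc.2.symm), mul_zero]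
        · have hrj : r = j := Fin.ext h
          subst hrj
          rw [hodd.2 r le_rfl hr, zero_mul]
        · rw [hodd.2 r (le_of_lt h) hr, zero_mul]
      · intro h; exact absurd (Finset.mem_univ i) h
    · intro s hs
      rw [h2, pow_succ, Matrix.mul_apply]
      apply Finset.sum_eq_zero
      intro r _
      by_cases hri : r = i
      · subst hri
        rw [hzero r s (by omega) (fun hc => hij_ne hc.1), mul_zero]
      · rcases lt_trichotomy (r : ℕ) (j : ℕ) with h | h | h
        · rw [hzero r s (by omega)
            (fun hc => by rw [hc.1] at h; exact lt_irrefl _ h), mul_zero]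
        · have hrj : r = j := Fin.ext h
          subst hrj
          rw [hodd.2 r le_rfl (fun hh => hij_ne hh.symm), zero_mul]
        · rw [hodd.2 r (le_of_lt h) hri, zero_mul]

end Aux

/-- A nilpotent `K0`-linear subspace of `M_n(K)` containing all strictly
upper-triangular matrices is exactly the space of strictly upper-triangular
matrices. -/
theorem stmt_11 (K : Type*) [DivisionRing K] (K0 : Type*) [Field K0] [Algebra K0 K]
    [FiniteDimensional K0 K] (n : ℕ) (hn : 0 < n)
    (W : Submodule K0 (Matrix (Fin n) (Fin n) K))
    (hnil : ∀ M ∈ W, IsNilpotent M)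
    (hcontains : ∀ M : Matrix (Fin n) (Fin n) K, (∀ i j : Fin n, j ≤ i → M i j = 0) → M ∈ W) :
    ∀ M : Matrix (Fin n) (Fin n) K, M ∈ W ↔ ∀ i j : Fin n, j ≤ i → M i j = 0 := by
  -- Step 0: basic setup for an arbitrary element of W
  have key : ∀ M ∈ W, ∀ a b : Fin n, (b : ℕ) ≤ (a : ℕ) → M a b = 0 := by
    intro M hM
    classical
    -- strictly upper part of M
    set U : Matrix (Fin n) (Fin n) K :=
      Matrix.of (fun a b => if (a : ℕ) < (b : ℕ) then M a b else 0) with hUdef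
    have hUW : U ∈ W := by
      apply hcontains
      intro a b hba
      have hba' : (b : ℕ) ≤ (a : ℕ) := hba
      show (if (a : ℕ) < (b : ℕ) then M a b else 0) = 0
      rw [if_neg (by omega)]
    set L : Matrix (Fin n) (Fin n) K := M - U with hLdef
    have hLW : L ∈ W := W.sub_mem hM hUW
    have hLup : ∀ a b : Fin n, (a : ℕ) < (b : ℕ) → L a b = 0 := by
      intro a b h
      show M a b - (if (a : ℕ) < (b : ℕ) then M a b else 0) = 0
      rw [if_pos h, sub_self]
    have hLeq : ∀ a b : Fin n, (b : ℕ) ≤ (a : ℕ) → L a b = M a b := by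
      intro a b h
      show M a b - (if (a : ℕ) < (b : ℕ) then M a b else 0) = M a b
      rw [if_neg (by omega), sub_zero]
    -- Step 1: diagonal of M is zero
    have hdiag : ∀ r : Fin n, M r r = 0 := by
      intro r
      obtain ⟨k, hk⟩ := hnil L hLW
      have h1 := (aux_lower_diag L hLup r k).1
      rw [hk] at h1
      have h2 : (L r r) ^ k = 0 := by
        rw [← h1]; simp
      rcases Nat.eq_zero_or_pos k with hk0 | hk0
      · subst hk0
        rw [pow_zero] at h2
        exact absurd h2 one_ne_zero
      · have : L r r = 0 := pow_eq_zero_iff hk0.ne' |>.mp h2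
        rw [← hLeq r r le_rfl]; exact this
    have hLdiag : ∀ r : Fin n, L r r = 0 := fun r => by
      rw [hLeq r r le_rfl]; exact hdiag r
    -- Step 2: strictly lower part of L is zero
    have hLstrict : ∀ a b : Fin n, (b : ℕ) < (a : ℕ) → L a b = 0 := by
      by_contra hcon
      push_neg at hcon
      obtain ⟨a0, b0, hab0, hne0⟩ := hcon
      -- the set of "gaps" of nonzero entries
      have hG : ∃ g : ℕ, ∃ a b : Fin n, (b : ℕ) + g = (a : ℕ) ∧ L a b ≠ 0 :=
        ⟨(a0 : ℕ) - (b0 : ℕ), a0, b0, by omega, hne0⟩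
      set d : ℕ := Nat.find hG with hddef
      obtain ⟨i', j', hd', hLne⟩ := Nat.find_spec hG
      rw [← hddef] at hd'
      have hd1 : 0 < d := by
        rcases Nat.eq_zero_or_pos d with h0 | h0
        · exfalso
          rw [h0, add_zero] at hd'
          have : i' = j' := Fin.ext hd'.symm
          subst this
          exact hLne (hLdiag i')
        · exact h0
      have hji' : (j' : ℕ) < (i' : ℕ) := by omega
      set a : K := L i' j' with hadef
      -- single entry strictly-upper matrix
      set N : Matrix (Fin n) (Fin n) K :=
        Matrix.of (fun r s => if r = j' ∧ s = i' then a⁻¹ else 0) with hNdef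
      have hNW : N ∈ W := by
        apply hcontains
        intro r s hsr
        have hsr' : (s : ℕ) ≤ (r : ℕ) := hsr
        show (if r = j' ∧ s = i' then a⁻¹ else 0) = 0
        rw [if_neg]
        rintro ⟨rfl, rfl⟩
        omega
      set P : Matrix (Fin n) (Fin n) K := L + N with hPdef
      have hPW : P ∈ W := W.add_mem hLW hNW
      have hPapp : ∀ r s : Fin n, P r s = L r s + (if r = j' ∧ s = i' then a⁻¹ else 0) :=
        fun r s => rfl
      have hPrs : ∀ r s : Fin n, P r s ≠ 0 → (s : ℕ) + d ≤ (r : ℕ) ∨ (r = j' ∧ s = i') := by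
        intro r s hne
        by_cases hc : r = j' ∧ s = i'
        · exact Or.inr hc
        · left
          rw [hPapp, if_neg hc, add_zero] at hne
          have hsr : (s : ℕ) < (r : ℕ) := by
            rcases lt_trichotomy (s : ℕ) (r : ℕ) with h | h | h
            · exact h
            · exfalso
              have : s = r := Fin.ext h
              subst this
              exact hne (hLdiag s)
            · exact absurd (hLup r s h) hne
          have hmem : ∃ a b : Fin n, (b : ℕ) + ((r : ℕ) - (s : ℕ)) = (a : ℕ) ∧ L a b ≠ 0 :=
            ⟨r, s, by omega, hne⟩
          have := Nat.find_min' hG hmem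
          omega
      have hane : a ≠ 0 := hLne
      have hca : P j' i' * P i' j' = 1 := by
        have h1 : P j' i' = a⁻¹ := by
          rw [hPapp, if_pos ⟨rfl, rfl⟩, hLup j' i' hji', zero_add]
        have h2 : P i' j' = a := by
          rw [hPapp, if_neg (fun hc => absurd (congrArg Fin.val hc.1) (by omega)), add_zero]
        rw [h1, h2, inv_mul_cancel₀ hane]
      obtain ⟨m, hm⟩ := hnil P hPW
      have h1 := aux_corner P j' i' d hd1 hd' hPrs hca m
      rw [two_mul, pow_add, hm, mul_zero] at h1
      simp only [Matrix.zero_apply] at h1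
      exact one_ne_zero h1.symm
    -- conclude
    intro c b hcb
    rcases Nat.lt_or_ge (b : ℕ) (c : ℕ) with h | h
    · rw [← hLeq c b (le_of_lt h)]
      exact hLstrict c b h
    · have : b = c := Fin.ext (le_antisymm hcb h)
      subst this
      exact hdiag b
  intro M
  constructor
  · intro hM i j hji
    exact key M hM i j hji
  · intro h
    exact hcontains M h
end

section
/- Let K be a division ring, K0 a field contained in the center of K over which K has finite dimension, and n a positive integer. Let T ∈ M_n(K) be a lower-triangular matrix (T i j = 0 whenever i < j). If for every strictly upper-triangular matrix U ∈ M_n(K) and every scalar t ∈ K0 the matrix U + t·T is nilpotent, then T = 0. -/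
section aux

variable {R : Type*} [Ring R] {n : ℕ}

lemma aux_pow_castSucc (M : Matrix (Fin (n+1)) (Fin (n+1)) R)
    (hcol : ∀ i : Fin n, M i.castSucc (Fin.last n) = 0) :
    ∀ (k : ℕ) (i j : Fin n), (M ^ k) i.castSucc j.castSucc
      = ((M.submatrix Fin.castSucc Fin.castSucc) ^ k) i j := by
  intro k
  induction k with
  | zero =>
      intro i j
      simp [Matrix.one_apply, Fin.castSucc_inj]
  | succ k ih =>
      intro i j
      rw [pow_succ', pow_succ', Matrix.mul_apply, Matrix.mul_apply,
        Fin.sum_univ_castSucc]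
      simp only [Matrix.submatrix_apply, hcol, zero_mul, add_zero, ih]

lemma aux_pow_succ (M : Matrix (Fin (n+1)) (Fin (n+1)) R)
    (hrow : ∀ j : Fin n, M 0 j.succ = 0) :
    ∀ (k : ℕ) (i j : Fin n), (M ^ k) i.succ j.succ
      = ((M.submatrix Fin.succ Fin.succ) ^ k) i j := by
  intro k
  induction k with
  | zero =>
      intro i j
      simp [Matrix.one_apply, Fin.succ_inj]
  | succ k ih =>
      intro i j
      rw [pow_succ, pow_succ, Matrix.mul_apply, Matrix.mul_apply,
        Fin.sum_univ_succ]
      simp only [Matrix.submatrix_apply, hrow, mul_zero, zero_add, ih]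

lemma aux_pow_diag {N : ℕ} (M : Matrix (Fin N) (Fin N) R) (p : Fin N)
    (hrow : ∀ b, b ≠ p → M p b = 0) :
    ∀ k : ℕ, (M ^ k) p p = (M p p) ^ k := by
  intro k
  induction k with
  | zero => simp [Matrix.one_apply]
  | succ k ih =>
      rw [pow_succ', pow_succ', Matrix.mul_apply,
        Finset.sum_eq_single p (fun b _ hb => by rw [hrow b hb, zero_mul])
          (fun hp => absurd (Finset.mem_univ p) hp), ih]

end aux

lemma key_lemma_s12 (K : Type*) [DivisionRing K] (K0 : Type*) [Field K0] [Algebra K0 K] :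
    ∀ (m : ℕ) (T : Matrix (Fin (m+1)) (Fin (m+1)) K),
      (∀ i j : Fin (m+1), i < j → T i j = 0) →
      (∀ U : Matrix (Fin (m+1)) (Fin (m+1)) K, (∀ i j : Fin (m+1), j ≤ i → U i j = 0) →
        ∀ t : K0, IsNilpotent (U + t • T)) → T = 0 := by
  intro m
  induction m with
  | zero =>
      intro T hT h
      have hone : ∀ a : Fin (0+1), a = 0 := fun a => Fin.ext (by omega)
      obtain ⟨k, hk⟩ := h 0 (fun i j _ => rfl) 1
      simp only [zero_add, one_smul] at hk
      have h0 : (T 0 0) ^ k = 0 := by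
        rw [← aux_pow_diag T 0 (fun b hb => absurd (hone b) hb), hk]
        rfl
      have hk0 : k ≠ 0 := by
        rintro rfl
        have := congrFun (congrFun hk 0) 0
        simp [Matrix.one_apply] at this
      have h00 : T 0 0 = 0 := pow_eq_zero_iff hk0 |>.mp h0
      ext i j
      rw [hone i, hone j, h00]; rfl
  | succ m ih =>
      intro T hT h
      set L : Fin (m+2) := Fin.last (m+1) with hL
      -- Step A: top-left block vanishes
      have hTL : ∀ i j : Fin (m+1), T i.castSucc j.castSucc = 0 := by
        have := ih (T.submatrix Fin.castSucc Fin.castSucc)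
          (fun i j hij => hT _ _ (by simpa [Fin.castSucc_lt_castSucc_iff] using hij))
          ?_
        · intro i j
          exact congrFun (congrFun this i) j
        · intro U' hU' t
          set U : Matrix (Fin (m+2)) (Fin (m+2)) K :=
            fun a b => if hab : a ≠ L ∧ b ≠ L then U' (a.castPred hab.1) (b.castPred hab.2)
              else 0 with hU
          have hUtri : ∀ i j : Fin (m+2), j ≤ i → U i j = 0 := by
            intro i j hij
            rw [hU]
            dsimp only
            split
            · rename_i hab
              exact hU' _ _ (by simp only [Fin.le_def, Fin.coe_castPred]; exact Fin.le_def.mp hij)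
            · rfl
          obtain ⟨k, hk⟩ := h U hUtri t
          have hcol : ∀ i : Fin (m+1), (U + t • T) i.castSucc L = 0 := by
            intro i
            have h1 : U i.castSucc L = 0 := by
              rw [hU]; dsimp only; rw [dif_neg (by simp)]
            have h2 : T i.castSucc L = 0 := hT _ _ (Fin.castSucc_lt_last i)
            simp [h1, h2]
          have hsub : (U + t • T).submatrix Fin.castSucc Fin.castSucc
              = U' + t • T.submatrix Fin.castSucc Fin.castSucc := by
            ext i j
            have hUe : U i.castSucc j.castSucc = U' i j := by
              rw [hU]
              dsimp only
              rw [dif_pos ⟨Fin.ne_last_of_lt (Fin.castSucc_lt_last i),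
                Fin.ne_last_of_lt (Fin.castSucc_lt_last j)⟩]
              simp [Fin.castPred_castSucc]
            simp only [Matrix.submatrix_apply, Matrix.add_apply, Matrix.smul_apply, hUe]
          refine ⟨k, ?_⟩
          ext i j
          rw [← hsub, ← aux_pow_castSucc _ hcol k i j, hk]
          rfl
      -- Step B: bottom-right block vanishes
      have hBR : ∀ i j : Fin (m+1), T i.succ j.succ = 0 := by
        have := ih (T.submatrix Fin.succ Fin.succ)
          (fun i j hij => hT _ _ (by simpa [Fin.succ_lt_succ_iff] using hij))
          ?_
        · intro i j
          exact congrFun (congrFun this i) j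
        · intro U' hU' t
          set U : Matrix (Fin (m+2)) (Fin (m+2)) K :=
            fun a b => if hab : a ≠ 0 ∧ b ≠ 0 then U' (a.pred hab.1) (b.pred hab.2)
              else 0 with hU
          have hUtri : ∀ i j : Fin (m+2), j ≤ i → U i j = 0 := by
            intro i j hij
            rw [hU]
            dsimp only
            split
            · rename_i hab
              exact hU' _ _ (by
                simp only [Fin.le_def, Fin.coe_pred]
                omega)
            · rfl
          obtain ⟨k, hk⟩ := h U hUtri t
          have hrow : ∀ j : Fin (m+1), (U + t • T) 0 j.succ = 0 := by
            intro j
            have h1 : U 0 j.succ = 0 := by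
              rw [hU]; dsimp only; rw [dif_neg (by simp)]
            have h2 : T 0 j.succ = 0 := hT _ _ (Fin.succ_pos j)
            simp [h1, h2]
          have hsub : (U + t • T).submatrix Fin.succ Fin.succ
              = U' + t • T.submatrix Fin.succ Fin.succ := by
            ext i j
            have hUe : U i.succ j.succ = U' i j := by
              rw [hU]
              dsimp only
              rw [dif_pos ⟨Fin.succ_ne_zero i, Fin.succ_ne_zero j⟩]
              simp [Fin.pred_succ]
            simp only [Matrix.submatrix_apply, Matrix.add_apply, Matrix.smul_apply, hUe]
          refine ⟨k, ?_⟩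
          ext i j
          rw [← hsub, ← aux_pow_succ _ hrow k i j, hk]
          rfl
      -- All entries except the corner vanish
      have hz : ∀ a b : Fin (m+2), ¬(a = L ∧ b = 0) → T a b = 0 := by
        intro a b hab
        rcases lt_or_ge a b with hlt | hle
        · exact hT a b hlt
        · by_cases ha : a = L
          · subst ha
            have hb : b ≠ 0 := fun hb0 => hab ⟨rfl, hb0⟩
            have : T (Fin.last (m+1)) b = 0 := by
              have := hBR ((Fin.last (m+1)).pred (by simp [Fin.ext_iff]))
                (b.pred hb)
              simpa [Fin.succ_pred] using this
            simpa [hL] using this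
          · have haL : a < L := lt_of_le_of_ne (Fin.le_last a) ha
            have hbL : b < L := lt_of_le_of_lt hle haL
            have := hTL (a.castPred (Fin.ne_last_of_lt haL)) (b.castPred (Fin.ne_last_of_lt hbL))
            simpa [Fin.castSucc_castPred] using this
      -- Corner entry
      have hL0 : (0 : Fin (m+2)) < L := by
        simp only [hL, Fin.lt_def, Fin.val_last, Fin.val_zero]
        omega
      have hcorner : T L 0 = 0 := by
        set c : K := T L 0 with hc
        set U : Matrix (Fin (m+2)) (Fin (m+2)) K :=
          fun a b => if a = 0 ∧ b = L then 1 else 0 with hU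
        have hUtri : ∀ i j : Fin (m+2), j ≤ i → U i j = 0 := by
          intro i j hij
          rw [hU]; dsimp only
          rw [if_neg]
          rintro ⟨rfl, rfl⟩
          exact absurd hij (not_le.mpr hL0)
        obtain ⟨k, hk⟩ := h U hUtri 1
        rw [one_smul] at hk
        set M : Matrix (Fin (m+2)) (Fin (m+2)) K := U + T with hM
        -- row 0 of M is e_L, row L of M is c * e_0
        have hrow0 : ∀ b, M 0 b = if b = L then 1 else 0 := by
          intro b
          rw [hM]
          simp only [Matrix.add_apply]
          have hT0 : T 0 b = 0 := by
            rcases eq_or_ne b 0 with rfl | hb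
            · exact hz 0 0 (fun hh => absurd hh.1 hL0.ne)
            · exact hT 0 b (Fin.pos_of_ne_zero hb)
          rw [hT0, add_zero, hU]
          dsimp only
          rcases eq_or_ne b L with rfl | hb
          · rw [if_pos ⟨rfl, rfl⟩, if_pos rfl]
          · rw [if_neg (fun hh => hb hh.2), if_neg hb]
        have hrowL : ∀ b, M L b = if b = 0 then c else 0 := by
          intro b
          rw [hM]
          simp only [Matrix.add_apply]
          have hUL : U L b = 0 := by
            rw [hU]; dsimp only
            rw [if_neg (fun hh => absurd hh.1 hL0.ne')]
          rw [hUL, zero_add]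
          rcases eq_or_ne b 0 with rfl | hb
          · rw [if_pos rfl, hc]
          · rw [if_neg hb]
            exact hz L b (fun hh => hb hh.2)
        have hM2row : ∀ b, (M * M) 0 b = if b = 0 then c else 0 := by
          intro b
          rw [Matrix.mul_apply,
            Finset.sum_eq_single L
              (fun x _ hx => by rw [hrow0 x, if_neg hx, zero_mul])
              (fun hp => absurd (Finset.mem_univ L) hp),
            hrow0 L, if_pos rfl, one_mul, hrowL]
        have hdiag : ∀ j : ℕ, ((M * M) ^ j) 0 0 = c ^ j := by
          have := aux_pow_diag (M * M) 0
            (fun b hb => by rw [hM2row b, if_neg hb])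
          intro j
          rw [this j, hM2row 0, if_pos rfl]
        have hknz : k ≠ 0 := by
          rintro rfl
          have := congrFun (congrFun hk 0) 0
          simp [Matrix.one_apply] at this
        have hMk : (M * M) ^ k = 0 := by
          rw [← pow_two, ← pow_mul, two_mul, pow_add, hk, zero_mul]
        have hck : c ^ k = 0 := by
          rw [← hdiag k, hMk]
          rfl
        exact pow_eq_zero_iff hknz |>.mp hck
      ext a b
      by_cases hab : a = L ∧ b = 0
      · rw [hab.1, hab.2, hcorner]; rfl
      · rw [hz a b hab]; rfl

/-- If `T` is lower-triangular and `U + t • T` is nilpotent for every strictly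
upper-triangular `U` and every `t ∈ K0`, then `T = 0`. -/
theorem stmt_12 (K : Type*) [DivisionRing K] (K0 : Type*) [Field K0] [Algebra K0 K]
    [FiniteDimensional K0 K] (n : ℕ) (hn : 0 < n)
    (T : Matrix (Fin n) (Fin n) K)
    (hT : ∀ i j : Fin n, i < j → T i j = 0)
    (h : ∀ U : Matrix (Fin n) (Fin n) K, (∀ i j : Fin n, j ≤ i → U i j = 0) →
      ∀ t : K0, IsNilpotent (U + t • T)) :
    T = 0 := by
  obtain ⟨m, rfl⟩ : ∃ m, n = m + 1 := ⟨n - 1, by omega⟩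
  exact key_lemma_s12 K K0 m T hT h
end

section
/- Let K be a division ring, K0 a field contained in the center of K over which K has finite dimension q, and n a positive integer. Let V be a K0-linear subspace of M_n(K) all of whose elements are nilpotent matrices, and let X ∈ K^n be a nonzero vector. Then the K0-linear subspace V·X = {M·X : M ∈ V} of K^n has dimension at most (n−1)·q over K0. -/
/-- If `V` is a nilpotent `K0`-linear subspace of `M_n(K)` and `X ∈ K^n` is nonzero,
then the image subspace `V · X = {M · X : M ∈ V}` of `K^n` has `K0`-dimension at most
`(n - 1) * q`. -/
theorem stmt_14 (K : Type*) [DivisionRing K] (K0 : Type*) [Field K0] [Algebra K0 K]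
    [FiniteDimensional K0 K] (q n : ℕ) (hq : Module.finrank K0 K = q) (hn : 0 < n)
    (V : Submodule K0 (Matrix (Fin n) (Fin n) K))
    (hV : ∀ M ∈ V, IsNilpotent M)
    (X : Fin n → K) (hX : X ≠ 0)
    (W : Submodule K0 (Fin n → K))
    (hW : ∀ y : Fin n → K, y ∈ W ↔ ∃ M ∈ V, M.mulVec X = y) :
    Module.finrank K0 W ≤ (n - 1) * q := by
  -- the right K-line through X
  set f : K →ₗ[K0] (Fin n → K) :=
    { toFun := fun c => fun i => X i * c
      map_add' := by intro a b; funext i; simp [mul_add]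
      map_smul' := by
        intro a c; funext i
        simp only [RingHom.id_apply, Pi.smul_apply, Algebra.smul_def,
          ← mul_assoc, ← Algebra.commutes] } with hf
  obtain ⟨j, hj⟩ : ∃ j, X j ≠ 0 := by
    by_contra h
    push_neg at h
    exact hX (funext h)
  have hinj : Function.Injective f := by
    intro a b hab
    have := congrFun hab j
    simp only [hf, LinearMap.coe_mk, AddHom.coe_mk] at this
    exact mul_left_cancel₀ hj this
  set L := LinearMap.range f with hL
  have hLrank : Module.finrank K0 L = q := by
    rw [hL, LinearMap.finrank_range_of_inj hinj, hq]
  have hdisj : Disjoint W L := by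
    rw [Submodule.disjoint_def]
    intro y hyW hyL
    obtain ⟨c, hc⟩ := hyL
    obtain ⟨M, hMV, hM⟩ := (hW y).mp hyW
    rcases eq_or_ne c 0 with rfl | hc0
    · rw [← hc]; funext i; simp [hf]
    · exfalso
      have key : ∀ k : ℕ, (M ^ k).mulVec X = fun i => X i * c ^ k := by
        intro k
        induction k with
        | zero => funext i; simp
        | succ k ih =>
          rw [pow_succ', ← Matrix.mulVec_mulVec, ih]
          funext i
          have : (M.mulVec fun i => X i * c ^ k) i
              = (M.mulVec X) i * c ^ k := by
            simp only [Matrix.mulVec, dotProduct, Finset.sum_mul, mul_assoc]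
          rw [this, hM, ← hc]
          simp only [hf, LinearMap.coe_mk, AddHom.coe_mk, pow_succ', ← mul_assoc]
      obtain ⟨k, hk⟩ := hV M hMV
      have := congrFun (key k) j
      rw [hk] at this
      simp only [Matrix.zero_mulVec, Pi.zero_apply] at this
      have : c ^ k = 0 := by
        rcases mul_eq_zero.mp this.symm with h | h
        · exact absurd h hj
        · exact h
      exact hc0 (pow_eq_zero_iff'.mp this).1
  have hsum := Submodule.finrank_sup_add_finrank_inf_eq W L
  rw [Disjoint.eq_bot hdisj, finrank_bot, add_zero, hLrank] at hsum
  have htot : Module.finrank K0 (Fin n → K) = n * q := by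
    rw [Module.finrank_pi_fintype, Finset.sum_const, Finset.card_univ,
      Fintype.card_fin, smul_eq_mul, hq]
  have hle : Module.finrank K0 W + q ≤ n * q := by
    rw [← hsum, ← htot]
    exact Submodule.finrank_le _
  have : (n - 1) * q = n * q - q := by
    cases n with
    | zero => omega
    | succ m => rw [Nat.succ_sub_one, Nat.succ_mul]; omega
  omega
end
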